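/- arXiv:1907.03439 — 4 statements merged into one kernel-verified Lean document; each statement's English description precedes it below -/
import Mathlib

section
/- Let A = (A_1,…,A_n) be a nonnegative vector in ℝ^n and D = n + A_1 + ⋯ + A_n. The Gaussian function f(x) = (2Π(A))^{−D/4} e^{−|x|^2/4} satisfies ∫_{ℝ^n_A} |f|^2 x^A dx = 1, ∫_{ℝ^n_A} |x|^2 |f|^2 x^A dx = D, and attains equality in the logarithmic Sobolev inequality with monomial weights: ∫_{ℝ^n_A} |f|^2 log(|f|^2) x^A dx = (D/2) · log( (2/(Π(A) e D)) ∫_{ℝ^n_A} |∇f|^2 x^A dx ). -/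
open MeasureTheory Real Filter

noncomputable section

/-- The positivity region `ℝ^n_A = {x : x_i > 0 whenever A_i > 0}`. -/
def monSet {ι : Type*} [Fintype ι] (A : ι → ℝ) : Set (EuclideanSpace ℝ ι) :=
  {x | ∀ i, 0 < A i → 0 < x i}

/-- The monomial weight `x^A = ∏ |x_i|^{A_i}`. -/
def monWeight {ι : Type*} [Fintype ι] (A : ι → ℝ) (x : EuclideanSpace ℝ ι) : ℝ :=
  ∏ i, |x i| ^ A i

/-- The homogeneous dimension `D = n + A_1 + ⋯ + A_n`. -/
def monDim {ι : Type*} [Fintype ι] (A : ι → ℝ) : ℝ :=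
  (Fintype.card ι : ℝ) + ∑ i, A i

/-- `k = #{i : A_i > 0}`. -/
def monK {ι : Type*} [Fintype ι] (A : ι → ℝ) : ℕ :=
  Nat.card {i : ι // 0 < A i}

/-- `Π(A) = [ (∏ Γ((A_i+1)/2)) / 2^k ]^{2/D}`. -/
def monPi {ι : Type*} [Fintype ι] (A : ι → ℝ) : ℝ :=
  ((∏ i, Gamma ((A i + 1) / 2)) / 2 ^ monK A) ^ (2 / monDim A)

/-! ### Auxiliary one-dimensional material -/

/-- Per-coordinate domain of integration. -/
def auxS (a : ℝ) : Set ℝ := if 0 < a then Set.Ioi 0 else Set.univ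

/-- Per-coordinate weight times Gaussian. -/
def auxg (a : ℝ) : ℝ → ℝ := fun t => |t| ^ a * exp (-t^2/2)

/-- Value of the per-coordinate integral. -/
def auxJ (a : ℝ) : ℝ := (if 0 < a then (1:ℝ) else 2) * (2 ^ ((a-1)/2) * Gamma ((a+1)/2))

lemma auxS_meas (a : ℝ) : MeasurableSet (auxS a) := by
  unfold auxS; split <;> simp [measurableSet_Ioi]

open Set in
lemma aux_key1 {b : ℝ} (hb : -1 < b) :
    ∫ t in Ioi (0:ℝ), |t| ^ b * exp (-t^2/2) = 2 ^ ((b-1)/2) * Gamma ((b+1)/2) := by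
  have h : ∫ t in Ioi (0:ℝ), |t| ^ b * exp (-t^2/2)
      = ∫ t in Ioi (0:ℝ), t ^ b * exp (-(1/2) * t ^ (2:ℝ)) := by
    refine setIntegral_congr_fun measurableSet_Ioi (fun t ht => ?_)
    rw [abs_of_pos ht, Real.rpow_two]
    ring_nf
  rw [h, integral_rpow_mul_exp_neg_mul_rpow two_pos hb one_half_pos,
    show ((1:ℝ)/2) = 2 ^ (-1:ℝ) by rw [Real.rpow_neg_one]; norm_num,
    ← Real.rpow_mul (by norm_num : (0:ℝ) ≤ 2), ← Real.rpow_add two_pos]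
  congr 1
  ring

open Set in
lemma aux_key2 {b : ℝ} (hb : -1 < b) :
    ∫ t : ℝ, |t| ^ b * exp (-t^2/2) = 2 * (2 ^ ((b-1)/2) * Gamma ((b+1)/2)) := by
  have h : ∫ t : ℝ, |t| ^ b * exp (-t^2/2)
      = ∫ t : ℝ, (fun s : ℝ => s ^ b * exp (-s^2/2)) |t| := by
    congr 1 with t
    simp only [sq_abs]
  rw [h, integral_comp_abs (f := fun s : ℝ => s ^ b * exp (-s^2/2)), ← aux_key1 hb]
  congr 1
  refine setIntegral_congr_fun measurableSet_Ioi (fun t ht => ?_)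
  rw [abs_of_pos ht]

lemma aux_int0 {a : ℝ} (ha : 0 ≤ a) : ∫ t in auxS a, auxg a t = auxJ a := by
  have ha' : (-1:ℝ) < a := by linarith
  unfold auxS auxg auxJ
  by_cases h : 0 < a
  · simp only [h, if_true, one_mul]
    exact aux_key1 ha'
  · simp only [h, if_false, Measure.restrict_univ]
    exact aux_key2 ha'

lemma aux_g2 {a : ℝ} (ha : 0 ≤ a) :
    (fun t : ℝ => t^2 * auxg a t) = auxg (a + 2) := by
  funext t
  unfold auxg
  rcases eq_or_ne t 0 with rfl | ht
  · simp [Real.zero_rpow (by positivity : a + 2 ≠ 0)]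
  · have h0 : (0:ℝ) < |t| := abs_pos.mpr ht
    rw [Real.rpow_add h0, show |t| ^ (2:ℝ) = t^2 by rw [Real.rpow_two, sq_abs]]
    ring

lemma aux_int2 {a : ℝ} (ha : 0 ≤ a) :
    ∫ t in auxS a, t^2 * auxg a t = (a + 1) * auxJ a := by
  have ha' : (-1:ℝ) < a + 2 := by linarith
  have hG : Gamma ((a + 2 + 1)/2) = (a+1)/2 * Gamma ((a+1)/2) := by
    rw [show (a+2+1)/2 = (a+1)/2 + 1 by ring, Gamma_add_one (by positivity)]
  have h2 : (2:ℝ) ^ ((a+2-1)/2) = 2 * 2 ^ ((a-1)/2) := by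
    rw [show (a+2-1)/2 = 1 + (a-1)/2 by ring, Real.rpow_add two_pos, Real.rpow_one]
  rw [show (∫ t in auxS a, t^2 * auxg a t) = ∫ t in auxS a, auxg (a+2) t by
      rw [← aux_g2 ha]]
  unfold auxS auxg auxJ
  by_cases h : 0 < a
  · simp only [h, if_true, one_mul]
    rw [aux_key1 ha', hG, h2]
    ring
  · simp only [h, if_false, Measure.restrict_univ]
    rw [aux_key2 ha', hG, h2]
    ring

lemma aux_intOn_Ioi {a : ℝ} (ha : -1 < a) : IntegrableOn (auxg a) (Set.Ioi 0) := by
  refine (integrableOn_rpow_mul_exp_neg_mul_sq one_half_pos ha).congr_fun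
    (fun t ht => ?_) measurableSet_Ioi
  unfold auxg
  rw [abs_of_pos ht]
  ring_nf

lemma aux_intOn0 {a : ℝ} (ha : 0 ≤ a) : IntegrableOn (auxg a) (auxS a) := by
  by_cases h : 0 < a
  · simpa [auxS, h] using aux_intOn_Ioi (by linarith : (-1:ℝ) < a)
  · have ha0 : a = 0 := le_antisymm (not_lt.1 h) ha
    subst ha0
    simp only [auxS, lt_irrefl, if_false, integrableOn_univ]
    have : auxg 0 = fun t : ℝ => exp (-(1/2) * t^2) := by
      funext t; unfold auxg; rw [Real.rpow_zero, one_mul]; ring_nf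
    rw [this]
    exact integrable_exp_neg_mul_sq one_half_pos

lemma aux_intOn2 {a : ℝ} (ha : 0 ≤ a) :
    IntegrableOn (fun t => t^2 * auxg a t) (auxS a) := by
  rw [aux_g2 ha]
  by_cases h : 0 < a
  · have h2 : (0:ℝ) < a + 2 := by linarith
    have hs : auxS a = auxS (a + 2) := by simp [auxS, h, h2]
    rw [hs]
    exact aux_intOn0 (by linarith)
  · have ha0 : a = 0 := le_antisymm (not_lt.1 h) ha
    subst ha0
    simp only [auxS, lt_irrefl, if_false, integrableOn_univ]
    have : auxg (0 + 2) = fun t : ℝ => t ^ (2:ℝ) * exp (-(1/2) * t^2) := by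
      funext t
      unfold auxg
      rw [zero_add, Real.rpow_two, sq_abs, ← Real.rpow_two]
      ring_nf
    rw [this]
    exact integrable_rpow_mul_exp_neg_mul_sq one_half_pos (by norm_num)

/-! ### Multivariate transfer lemmas -/

section multi

open Set

variable {n : ℕ} (A : Fin n → ℝ)

lemma aux_pi_meas : MeasurableSet (Set.univ.pi (fun i => auxS (A i))) :=
  MeasurableSet.univ_pi (fun _ => auxS_meas _)

lemma aux_mem_pi (y : Fin n → ℝ) :
    y ∈ Set.univ.pi (fun i => auxS (A i)) ↔ ∀ i, 0 < A i → 0 < y i := by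
  rw [Set.mem_pi]
  constructor
  · intro h i hi
    have := h i (mem_univ i)
    simpa only [auxS, hi, if_true, mem_Ioi] using this
  · intro h i _
    by_cases hi : 0 < A i
    · simp only [auxS, hi, if_true, mem_Ioi]
      exact h i hi
    · simp [auxS, hi]

lemma aux_monSet_meas : MeasurableSet (monSet A) := by
  have : monSet A = ((MeasurableEquiv.toLp 2 (Fin n → ℝ)).symm) ⁻¹'
      (Set.univ.pi (fun i => auxS (A i))) := by
    ext x
    rw [mem_preimage, aux_mem_pi]
    exact Iff.rfl
  rw [this]
  exact (aux_pi_meas A).preimage ((MeasurableEquiv.toLp 2 (Fin n → ℝ)).symm).measurable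

lemma aux_map_eq :
    (volume : Measure (EuclideanSpace ℝ (Fin n))).restrict (monSet A) =
      ((volume : Measure (Fin n → ℝ)).restrict (Set.univ.pi (fun i => auxS (A i)))).map
        ((MeasurableEquiv.toLp 2 (Fin n → ℝ)).symm).symm := by
  have hp := (EuclideanSpace.volume_preserving_symm_measurableEquiv_toLp (Fin n)).symm
  have hpre : ((MeasurableEquiv.toLp 2 (Fin n → ℝ)).symm).symm ⁻¹' (monSet A)
      = Set.univ.pi (fun i => auxS (A i)) := by
    ext y
    rw [mem_preimage, aux_mem_pi]
    exact Iff.rfl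
  calc (volume : Measure (EuclideanSpace ℝ (Fin n))).restrict (monSet A)
      = ((volume : Measure (Fin n → ℝ)).map
          ((MeasurableEquiv.toLp 2 (Fin n → ℝ)).symm).symm).restrict (monSet A) := by
        rw [hp.map_eq]
    _ = _ := by
        rw [Measure.restrict_map ((MeasurableEquiv.toLp 2 (Fin n → ℝ)).symm).symm.measurable
          (aux_monSet_meas A), hpre]

lemma aux_indicator_prod (g : Fin n → ℝ → ℝ) :
    (Set.univ.pi (fun i => auxS (A i))).indicator (fun y => ∏ i, g i (y i)) =
      fun y => ∏ i, (auxS (A i)).indicator (g i) (y i) := by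
  funext y
  by_cases hy : y ∈ Set.univ.pi (fun i => auxS (A i))
  · rw [indicator_of_mem hy]
    exact Finset.prod_congr rfl fun i _ =>
      (indicator_of_mem (hy i (mem_univ i)) (g i)).symm
  · rw [indicator_of_notMem hy]
    rw [Set.mem_pi] at hy
    push_neg at hy
    obtain ⟨i, -, hi⟩ := hy
    exact (Finset.prod_eq_zero (Finset.mem_univ i)
      (indicator_of_notMem hi (g i))).symm

lemma aux_transfer (g : Fin n → ℝ → ℝ) :
    ∫ x in monSet A, ∏ i, g i (x i) = ∏ i, ∫ t in auxS (A i), g i t := by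
  rw [aux_map_eq A, integral_map_equiv]
  have : (fun y : Fin n → ℝ =>
      ∏ i, g i (((MeasurableEquiv.toLp 2 (Fin n → ℝ)).symm).symm y i)) =
      fun y => ∏ i, g i (y i) := rfl
  rw [this, ← integral_indicator (aux_pi_meas A), aux_indicator_prod A g,
    integral_fintype_prod_volume_eq_prod (fun i => (auxS (A i)).indicator (g i))]
  exact Finset.prod_congr rfl fun i _ => integral_indicator (auxS_meas _)

lemma aux_integrable (g : Fin n → ℝ → ℝ) (hg : ∀ i, IntegrableOn (g i) (auxS (A i))) :
    IntegrableOn (fun x : EuclideanSpace ℝ (Fin n) => ∏ i, g i (x i)) (monSet A) := by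
  rw [IntegrableOn, aux_map_eq A, integrable_map_equiv]
  have : ((fun x : EuclideanSpace ℝ (Fin n) => ∏ i, g i (x i)) ∘
      ((MeasurableEquiv.toLp 2 (Fin n → ℝ)).symm).symm) = fun y : Fin n → ℝ => ∏ i, g i (y i) := rfl
  rw [this]
  refine (integrable_indicator_iff (aux_pi_meas A)).1 ?_
  rw [aux_indicator_prod A g]
  exact Integrable.fintype_prod (fun i => (integrable_indicator_iff (auxS_meas _)).2 (hg i))

lemma aux_prodJ (hn : 0 < n) (hA : ∀ i, 0 ≤ A i) :
    ∏ i, auxJ (A i) = (2 * monPi A) ^ (monDim A / 2) := by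
  have hΓ : ∀ i, 0 < Gamma ((A i + 1) / 2) :=
    fun i => Gamma_pos_of_pos (by have := hA i; linarith)
  have hΓp : 0 < ∏ i, Gamma ((A i + 1) / 2) := Finset.prod_pos fun i _ => hΓ i
  have hD : 0 < monDim A := by
    have h1 : 0 ≤ ∑ i, A i := Finset.sum_nonneg fun i _ => hA i
    have h2 : (0:ℝ) < n := Nat.cast_pos.2 hn
    unfold monDim
    simp only [Fintype.card_fin]
    linarith
  have hQ : 0 < (∏ i, Gamma ((A i + 1) / 2)) / 2 ^ monK A :=
    div_pos hΓp (by positivity)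
  have hk : monK A = (Finset.univ.filter (fun i => 0 < A i)).card := by
    rw [monK, Nat.card_eq_fintype_card, Fintype.card_subtype]
  have hkn : (Finset.univ.filter (fun i => 0 < A i)).card ≤ n := by
    calc _ ≤ Finset.univ.card := Finset.card_filter_le _ _
    _ = n := by simp
  have hRHS : (2 * monPi A) ^ (monDim A / 2) =
      2 ^ (monDim A / 2) * ((∏ i, Gamma ((A i + 1) / 2)) / 2 ^ monK A) := by
    rw [monPi, mul_rpow (by norm_num) (Real.rpow_nonneg hQ.le _),
      ← Real.rpow_mul hQ.le,
      show (2 / monDim A) * (monDim A / 2) = 1 by field_simp,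
      Real.rpow_one]
  rw [hRHS]
  unfold auxJ
  rw [Finset.prod_mul_distrib, Finset.prod_mul_distrib, Finset.prod_ite,
    Finset.prod_const_one, Finset.prod_const, one_mul,
    ← Real.rpow_sum_of_pos two_pos]
  have hcard : (Finset.univ.filter (fun i => ¬ 0 < A i)).card = n - monK A := by
    have h := Finset.card_filter_add_card_filter_not (p := fun i => 0 < A i)
      (s := (Finset.univ : Finset (Fin n)))
    simp only [Finset.card_univ, Fintype.card_fin] at h
    omega
  have hsum : ∑ i, (A i - 1)/2 = ((∑ i, A i) - n)/2 := by
    rw [← Finset.sum_div, Finset.sum_sub_distrib]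
    simp
  have hDdef : monDim A = n + ∑ i, A i := by
    unfold monDim; simp
  have hkey : (2:ℝ) ^ ((n:ℝ) - monK A) * 2 ^ (((∑ i, A i) - n)/2)
      = 2 ^ (monDim A/2) / 2 ^ (monK A) := by
    rw [← Real.rpow_natCast (2:ℝ) (monK A), ← Real.rpow_add two_pos,
      ← Real.rpow_sub two_pos, hDdef]
    congr 1
    ring
  rw [hcard, ← Real.rpow_natCast (2:ℝ) (n - monK A), Nat.cast_sub (hk ▸ hkn), hsum,
    ← mul_assoc, hkey]
  ring

end multi

lemma aux_fderiv {E : Type*} [NormedAddCommGroup E] [InnerProductSpace ℝ E] (C : ℝ) (hC : 0 < C)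
    (x : E) :
    ‖fderiv ℝ (fun y : E => C * exp (-‖y‖^2/4)) x‖^2
      = ‖x‖^2 * (C * exp (-‖x‖^2/4))^2 / 4 := by
  have h2 : HasFDerivAt (fun y : E => -‖y‖^2/4) ((-(1:ℝ)/4) • (2 • innerSL ℝ x)) x := by
    have h1 := (hasStrictFDerivAt_norm_sq x).hasFDerivAt
    have := h1.const_mul (-(1:ℝ)/4)
    refine this.congr_of_eventuallyEq (Eventually.of_forall fun y => ?_)
    ring
  have h3 := h2.exp
  have h4 := h3.const_mul C
  rw [h4.fderiv]
  rw [smul_smul, smul_smul, ← Nat.cast_smul_eq_nsmul ℝ 2 ((innerSL ℝ) x), smul_smul,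
    norm_smul, innerSL_apply_norm, Real.norm_eq_abs]
  have hneg : C * rexp (-‖x‖ ^ 2 / 4) * (-1 / 4) * ((2:ℕ):ℝ) < 0 := by
    have h := mul_pos hC (exp_pos (-‖x‖ ^ 2 / 4))
    nlinarith
  rw [abs_of_neg hneg]
  push_cast
  ring

lemma aux_norm_sq {n : ℕ} (x : EuclideanSpace ℝ (Fin n)) : ‖x‖^2 = ∑ i, x i ^ 2 := by
  rw [EuclideanSpace.norm_eq, sq_sqrt (by positivity)]
  simp [sq_abs]

/-- the Gaussian `f(x) = (2Π(A))^{-D/4} e^{-|x|²/4}` is normalized, has second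
moment `D`, and attains equality in the logarithmic Sobolev inequality with monomial weights. -/
theorem gaussian_extremal_logSobolev {n : ℕ} (hn : 0 < n) (A : Fin n → ℝ) (hA : ∀ i, 0 ≤ A i)
    (f : EuclideanSpace ℝ (Fin n) → ℝ)
    (hf : f = fun x => (2 * monPi A) ^ (-(monDim A) / 4) * exp (-‖x‖ ^ 2 / 4)) :
    (∫ x in monSet A, f x ^ 2 * monWeight A x) = 1 ∧
    (∫ x in monSet A, ‖x‖ ^ 2 * f x ^ 2 * monWeight A x) = monDim A ∧
    (∫ x in monSet A, f x ^ 2 * log (f x ^ 2) * monWeight A x) =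
      monDim A / 2 *
        log (2 / (monPi A * exp 1 * monDim A) *
          ∫ x in monSet A, ‖fderiv ℝ f x‖ ^ 2 * monWeight A x) := by
  -- basic positivity facts
  have hΓ : ∀ i, 0 < Gamma ((A i + 1) / 2) :=
    fun i => Gamma_pos_of_pos (by have := hA i; linarith)
  have hΓp : 0 < ∏ i, Gamma ((A i + 1) / 2) := Finset.prod_pos fun i _ => hΓ i
  have hD : 0 < monDim A := by
    have h1 : 0 ≤ ∑ i, A i := Finset.sum_nonneg fun i _ => hA i
    have h2 : (0:ℝ) < n := Nat.cast_pos.2 hn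
    unfold monDim
    simp only [Fintype.card_fin]
    linarith
  have hQ : 0 < (∏ i, Gamma ((A i + 1) / 2)) / 2 ^ monK A :=
    div_pos hΓp (by positivity)
  have hPi : 0 < monPi A := Real.rpow_pos_of_pos hQ _
  have h2Pi : 0 < 2 * monPi A := by linarith
  set C : ℝ := (2 * monPi A) ^ (-(monDim A) / 4) with hCdef
  have hC : 0 < C := Real.rpow_pos_of_pos h2Pi _
  have hC2 : C^2 = (2 * monPi A) ^ (-(monDim A)/2) := by
    rw [hCdef, ← Real.rpow_natCast ((2 * monPi A) ^ (-(monDim A) / 4)) 2,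
      ← Real.rpow_mul h2Pi.le]
    congr 1
    push_cast
    ring
  have hCJ : C^2 * ∏ i, auxJ (A i) = 1 := by
    rw [aux_prodJ A hn hA, hC2, ← Real.rpow_add h2Pi,
      show -(monDim A)/2 + monDim A / 2 = 0 by ring, Real.rpow_zero]
  subst hf
  set f : EuclideanSpace ℝ (Fin n) → ℝ := fun x => C * exp (-‖x‖ ^ 2 / 4) with hfdef
  -- pointwise identities
  have hexp2 : ∀ x : EuclideanSpace ℝ (Fin n),
      exp (-‖x‖^2/4)^2 = ∏ i, exp (-(x i)^2/2) := by
    intro x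
    rw [sq, ← Real.exp_add, aux_norm_sq x, ← Real.exp_sum]
    congr 1
    rw [← Finset.sum_div, Finset.sum_neg_distrib]
    ring
  have hfsq : ∀ x : EuclideanSpace ℝ (Fin n),
      f x ^ 2 * monWeight A x = C^2 * ∏ i, auxg (A i) (x i) := by
    intro x
    rw [hfdef]
    simp only [mul_pow]
    rw [hexp2 x, monWeight, mul_assoc, ← Finset.prod_mul_distrib]
    congr 1
    exact Finset.prod_congr rfl fun i _ => by rw [auxg]; ring
  -- statement 1
  have S1 : (∫ x in monSet A, f x ^ 2 * monWeight A x) = 1 := by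
    calc (∫ x in monSet A, f x ^ 2 * monWeight A x)
        = ∫ x in monSet A, C^2 * ∏ i, auxg (A i) (x i) := by
          exact setIntegral_congr_fun (aux_monSet_meas A) (fun x _ => hfsq x)
      _ = C^2 * ∫ x in monSet A, ∏ i, auxg (A i) (x i) := integral_const_mul _ _
      _ = C^2 * ∏ i, ∫ t in auxS (A i), auxg (A i) t :=
          by rw [aux_transfer A (fun i => auxg (A i))]
      _ = C^2 * ∏ i, auxJ (A i) := by
          congr 1
          exact Finset.prod_congr rfl fun i _ => aux_int0 (hA i)
      _ = 1 := hCJ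
  refine ⟨S1, ?_⟩
  -- statement 2 setup
  set G : Fin n → Fin n → ℝ → ℝ :=
    fun j i t => (if i = j then t^2 else 1) * auxg (A i) t with hGdef
  have hGprod : ∀ (j : Fin n) (x : EuclideanSpace ℝ (Fin n)),
      (∏ i, G j i (x i)) = x j ^ 2 * ∏ i, auxg (A i) (x i) := by
    intro j x
    rw [hGdef]
    simp only
    rw [Finset.prod_mul_distrib, Finset.prod_ite_eq' Finset.univ j (fun i => (x i)^2)]
    simp
  have hGint : ∀ j i, IntegrableOn (G j i) (auxS (A i)) := by
    intro j i
    by_cases h : i = j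
    · subst h
      have : G i i = fun t => t^2 * auxg (A i) t := by
        funext t; rw [hGdef]; simp
      rw [this]
      exact aux_intOn2 (hA i)
    · have : G j i = auxg (A i) := by
        funext t; rw [hGdef]; simp [h]
      rw [this]
      exact aux_intOn0 (hA i)
  have hGval : ∀ j i, (∫ t in auxS (A i), G j i t)
      = (if i = j then A i + 1 else 1) * auxJ (A i) := by
    intro j i
    by_cases h : i = j
    · subst h
      simp only [if_pos rfl]
      have : G i i = fun t => t^2 * auxg (A i) t := by
        funext t; rw [hGdef]; simp
      rw [this]
      exact aux_int2 (hA i)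
    · simp only [if_neg h, one_mul]
      have : G j i = auxg (A i) := by
        funext t; rw [hGdef]; simp [h]
      rw [this]
      exact aux_int0 (hA i)
  have hnormsplit : ∀ x : EuclideanSpace ℝ (Fin n),
      ‖x‖ ^ 2 * f x ^ 2 * monWeight A x = C^2 * ∑ j, ∏ i, G j i (x i) := by
    intro x
    rw [mul_assoc, hfsq x, aux_norm_sq x, Finset.mul_sum, Finset.sum_mul]
    refine Finset.sum_congr rfl fun j _ => ?_
    rw [hGprod j x]
    ring
  have S2 : (∫ x in monSet A, ‖x‖ ^ 2 * f x ^ 2 * monWeight A x) = monDim A := by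
    calc (∫ x in monSet A, ‖x‖ ^ 2 * f x ^ 2 * monWeight A x)
        = ∫ x in monSet A, C^2 * ∑ j, ∏ i, G j i (x i) :=
          setIntegral_congr_fun (aux_monSet_meas A) (fun x _ => hnormsplit x)
      _ = C^2 * ∫ x in monSet A, ∑ j, ∏ i, G j i (x i) := integral_const_mul _ _
      _ = C^2 * ∑ j, ∫ x in monSet A, ∏ i, G j i (x i) := by
          rw [integral_finset_sum _ (fun j _ => aux_integrable A (G j) (hGint j))]
      _ = C^2 * ∑ j, ∏ i, ∫ t in auxS (A i), G j i t := by
          congr 1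
          exact Finset.sum_congr rfl fun j _ => aux_transfer A (G j)
      _ = C^2 * ∑ j, (A j + 1) * ∏ i, auxJ (A i) := by
          congr 1
          refine Finset.sum_congr rfl fun j _ => ?_
          rw [show (∏ i, ∫ t in auxS (A i), G j i t)
              = ∏ i, (if i = j then A i + 1 else 1) * auxJ (A i) from
            Finset.prod_congr rfl fun i _ => hGval j i]
          rw [Finset.prod_mul_distrib,
            Finset.prod_ite_eq' Finset.univ j (fun i => A i + 1)]
          simp
      _ = C^2 * ((monDim A) * ∏ i, auxJ (A i)) := by
          rw [← Finset.sum_mul]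
          congr 2
          rw [Finset.sum_add_distrib]
          simp [monDim]
          ring
      _ = monDim A := by
          rw [show C^2 * ((monDim A) * ∏ i, auxJ (A i))
              = monDim A * (C^2 * ∏ i, auxJ (A i)) by ring, hCJ, mul_one]
  refine ⟨S2, ?_⟩
  -- gradient integral
  have hfd : ∀ x : EuclideanSpace ℝ (Fin n),
      ‖fderiv ℝ f x‖^2 = ‖x‖^2 * f x ^2 / 4 := by
    intro x
    rw [hfdef]
    exact aux_fderiv C hC x
  have hgrad : (∫ x in monSet A, ‖fderiv ℝ f x‖ ^ 2 * monWeight A x) = monDim A / 4 := by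
    calc (∫ x in monSet A, ‖fderiv ℝ f x‖ ^ 2 * monWeight A x)
        = ∫ x in monSet A, (4:ℝ)⁻¹ * (‖x‖ ^ 2 * f x ^ 2 * monWeight A x) := by
          refine setIntegral_congr_fun (aux_monSet_meas A) (fun x _ => ?_)
          rw [hfd x]
          ring
      _ = (4:ℝ)⁻¹ * ∫ x in monSet A, ‖x‖ ^ 2 * f x ^ 2 * monWeight A x :=
          integral_const_mul _ _
      _ = monDim A / 4 := by rw [S2]; ring
  -- the log identity
  have hfx2 : ∀ x : EuclideanSpace ℝ (Fin n),
      f x ^ 2 = C^2 * exp (-‖x‖^2/4)^2 := by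
    intro x; rw [hfdef]; ring
  have hlog : ∀ x : EuclideanSpace ℝ (Fin n),
      log (f x ^ 2) = log (C^2) + (-‖x‖^2/2) := by
    intro x
    rw [hfx2 x, Real.log_mul (by positivity) (by positivity)]
    congr 1
    rw [Real.log_pow, Real.log_exp]
    push_cast
    ring
  have int1 : IntegrableOn (fun x : EuclideanSpace ℝ (Fin n) =>
      f x ^ 2 * monWeight A x) (monSet A) := by
    refine (Integrable.congr ((aux_integrable A (fun i => auxg (A i))
      (fun i => aux_intOn0 (hA i))).const_mul (C^2)) ?_)
    exact Eventually.of_forall fun x => (hfsq x).symm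
  have int2 : IntegrableOn (fun x : EuclideanSpace ℝ (Fin n) =>
      ‖x‖ ^ 2 * f x ^ 2 * monWeight A x) (monSet A) := by
    have hsum : Integrable (fun x : EuclideanSpace ℝ (Fin n) =>
        ∑ j, ∏ i, G j i (x i)) (volume.restrict (monSet A)) :=
      integrable_finset_sum (μ := volume.restrict (monSet A))
        (f := fun j (x : EuclideanSpace ℝ (Fin n)) => ∏ i, G j i (x i))
        Finset.univ (fun j _ => aux_integrable A (G j) (hGint j))
    refine (Integrable.congr (hsum.const_mul (C^2)) ?_)
    exact Eventually.of_forall fun x => (hnormsplit x).symm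
  have S3L : (∫ x in monSet A, f x ^ 2 * log (f x ^ 2) * monWeight A x)
      = log (C^2) * 1 + (-(2:ℝ)⁻¹) * monDim A := by
    calc (∫ x in monSet A, f x ^ 2 * log (f x ^ 2) * monWeight A x)
        = ∫ x in monSet A, (log (C^2) * (f x ^ 2 * monWeight A x)
            + (-(2:ℝ)⁻¹) * (‖x‖ ^ 2 * f x ^ 2 * monWeight A x)) := by
          refine setIntegral_congr_fun (aux_monSet_meas A) (fun x _ => ?_)
          rw [hlog x]
          ring
      _ = (∫ x in monSet A, log (C^2) * (f x ^ 2 * monWeight A x))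
            + ∫ x in monSet A, (-(2:ℝ)⁻¹) * (‖x‖ ^ 2 * f x ^ 2 * monWeight A x) :=
          integral_add (int1.const_mul _) (int2.const_mul _)
      _ = log (C^2) * (∫ x in monSet A, f x ^ 2 * monWeight A x)
            + (-(2:ℝ)⁻¹) * ∫ x in monSet A, ‖x‖ ^ 2 * f x ^ 2 * monWeight A x := by
          rw [integral_const_mul, integral_const_mul]
      _ = log (C^2) * 1 + (-(2:ℝ)⁻¹) * monDim A := by rw [S1, S2]
  have hlogC2 : log (C^2) = -(monDim A)/2 * log (2 * monPi A) := by
    rw [hC2, Real.log_rpow h2Pi]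
  have harg : 2 / (monPi A * exp 1 * monDim A) * (monDim A / 4)
      = (2 * monPi A * exp 1)⁻¹ := by
    have he : (0:ℝ) < exp 1 := exp_pos 1
    field_simp
    ring
  rw [hgrad, harg, S3L, hlogC2, Real.log_inv,
    Real.log_mul (by positivity) (exp_pos 1).ne', Real.log_mul (by norm_num) hPi.ne',
    Real.log_exp]
  ring
end
end

section
/- Let A = (A_1,…,A_n) be a nonnegative vector in ℝ^n and D = n + A_1 + ⋯ + A_n. Let f : ℝ^n → ℝ be measurable with ∫_{ℝ^n_A} |f|^2 x^A dx = 1 and ∫_{ℝ^n_A} |f|^2 |x|^2 x^A dx < ∞, and assume |f|^2 log(|f|^2) is integrable on ℝ^n_A with respect to x^A dx. Then −∫_{ℝ^n_A} |f|^2 log(|f|^2) x^A dx ≤ (D/2) · log( (2 Π(A) e / D) ∫_{ℝ^n_A} |f|^2 |x|^2 x^A dx ). -/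
open MeasureTheory Real Filter

noncomputable section

open Set

def gS {n : ℕ} (A : Fin n → ℝ) (i : Fin n) : Set ℝ := if 0 < A i then Ioi 0 else univ

def gfun {n : ℕ} (A : Fin n → ℝ) (b : ℝ) (i : Fin n) : ℝ → ℝ :=
  Set.indicator (gS A i) (fun t => |t| ^ (A i) * exp (-b * t^2))

lemma measurableSet_monSet {n : ℕ} (A : Fin n → ℝ) : MeasurableSet (monSet A) := by
  have : monSet A = ⋂ i, {x : EuclideanSpace ℝ (Fin n) | 0 < A i → 0 < x i} := by
    ext x; simp [monSet]
  rw [this]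
  refine MeasurableSet.iInter fun i => ?_
  by_cases h : 0 < A i
  · simp only [h, forall_true_left]
    exact measurableSet_lt measurable_const
      ((measurable_pi_apply i).comp ((MeasurableEquiv.toLp 2 (Fin n → ℝ)).symm).measurable)
  · simp only [h, false_implies]
    simp
lemma norm_sq_eq {n : ℕ} (x : EuclideanSpace ℝ (Fin n)) : ‖x‖^2 = ∑ i, (x i)^2 := by
  rw [EuclideanSpace.norm_eq, sq_sqrt (by positivity)]
  simp [sq_abs]

lemma indicator_prod {n : ℕ} (A : Fin n → ℝ) (b : ℝ) (x : EuclideanSpace ℝ (Fin n)) :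
    Set.indicator (monSet A) (fun x : EuclideanSpace ℝ (Fin n) =>
      exp (-b * ‖x‖^2) * monWeight A x) x = ∏ i, gfun A b i (x i) := by
  by_cases hx : x ∈ monSet A
  · rw [Set.indicator_of_mem hx]
    have : ∀ i, gfun A b i (x i) = |x i| ^ (A i) * exp (-b * (x i)^2) := by
      intro i
      refine Set.indicator_of_mem ?_ _
      unfold gS
      by_cases h : 0 < A i
      · simp only [h, if_true]; exact hx i h
      · simp [h]
    simp only [this, Finset.prod_mul_distrib, ← Real.exp_sum]
    rw [monWeight, norm_sq_eq, Finset.mul_sum]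
    simp only [neg_mul]
    rw [mul_comm]
  · rw [Set.indicator_of_notMem hx]
    simp only [monSet, Set.mem_setOf_eq, not_forall] at hx
    obtain ⟨i, hAi, hxi⟩ := hx
    refine (Finset.prod_eq_zero (Finset.mem_univ i) ?_).symm
    rw [gfun, Set.indicator_of_notMem]
    unfold gS
    simp [hAi, hxi]

lemma integrable_gfun {n : ℕ} (A : Fin n → ℝ) (hA : ∀ i, 0 ≤ A i) {b : ℝ} (hb : 0 < b)
    (i : Fin n) : Integrable (gfun A b i) := by
  unfold gfun gS
  by_cases h : 0 < A i
  · simp only [h, if_true]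
    rw [integrable_indicator_iff measurableSet_Ioi]
    exact (integrableOn_rpow_mul_exp_neg_mul_sq hb (by linarith : (-1:ℝ) < A i)).congr_fun
      (fun t ht => by rw [abs_of_pos ht]) measurableSet_Ioi
  · simp only [h, if_false, Set.indicator_univ]
    have h0 : A i = 0 := le_antisymm (not_lt.mp h) (hA i)
    simp only [h0, Real.rpow_zero, one_mul]
    exact integrable_exp_neg_mul_sq hb

lemma integral_gfun {n : ℕ} (A : Fin n → ℝ) (hA : ∀ i, 0 ≤ A i) {b : ℝ} (hb : 0 < b)
    (i : Fin n) : ∫ t, gfun A b i t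
      = b ^ (-(A i + 1)/2) * Gamma ((A i + 1)/2) * (if 0 < A i then (1/2:ℝ) else 1) := by
  unfold gfun gS
  by_cases h : 0 < A i
  · simp only [h, if_true]
    rw [integral_indicator measurableSet_Ioi]
    rw [show ∫ t in Ioi (0:ℝ), |t| ^ (A i) * exp (-b * t^2)
        = ∫ t in Ioi (0:ℝ), t ^ (A i) * exp (-b * t^(2:ℝ)) from
      setIntegral_congr_fun measurableSet_Ioi (fun t ht => by
        rw [abs_of_pos ht, Real.rpow_two])]
    rw [integral_rpow_mul_exp_neg_mul_rpow two_pos (by linarith) hb]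
    ring
  · simp only [h, if_false, Set.indicator_univ]
    have h0 : A i = 0 := le_antisymm (not_lt.mp h) (hA i)
    simp only [h0, Real.rpow_zero, one_mul, mul_one]
    rw [integral_gaussian]
    rw [show ((0:ℝ)+1)/2 = 1/2 by norm_num, Real.Gamma_one_half_eq]
    rw [show -((0:ℝ)+1)/2 = -(1/2) by norm_num, Real.rpow_neg hb.le,
      Real.sqrt_div pi_pos.le, ← Real.sqrt_eq_rpow]
    rw [div_eq_mul_inv, mul_comm]

lemma monK_eq {n : ℕ} (A : Fin n → ℝ) :
    monK A = (Finset.univ.filter (fun i => 0 < A i)).card := by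
  rw [monK, Nat.card_eq_fintype_card, Fintype.card_subtype]

lemma gauss_mon {n : ℕ} (A : Fin n → ℝ) (hA : ∀ i, 0 ≤ A i) {b : ℝ} (hb : 0 < b) :
    IntegrableOn (fun x : EuclideanSpace ℝ (Fin n) => exp (-b * ‖x‖^2) * monWeight A x)
      (monSet A) ∧
    ∫ x in monSet A, exp (-b * ‖x‖^2) * monWeight A x
      = b ^ (-(monDim A)/2) * ((∏ i, Gamma ((A i + 1)/2)) / 2 ^ monK A) := by
  set F : EuclideanSpace ℝ (Fin n) → ℝ := fun x => exp (-b * ‖x‖^2) * monWeight A x with hF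
  set G : (Fin n → ℝ) → ℝ := fun y => ∏ i, gfun A b i (y i) with hG
  have hGint : Integrable G := Integrable.fintype_prod (fun i => integrable_gfun A hA hb i)
  have hmp := EuclideanSpace.volume_preserving_symm_measurableEquiv_toLp (Fin n)
  have hemb := ((MeasurableEquiv.toLp 2 (Fin n → ℝ)).symm).measurableEmbedding
  have hcomp : (fun x : EuclideanSpace ℝ (Fin n) => G ((MeasurableEquiv.toLp 2 (Fin n → ℝ)).symm x))
      = fun x => ∏ i, gfun A b i (x i) := rfl
  have hind : (Set.indicator (monSet A) F) = fun x => ∏ i, gfun A b i (x i) :=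
    funext (indicator_prod A b)
  have hIE : Integrable (Set.indicator (monSet A) F) := by
    rw [hind, ← hcomp]
    exact (hmp.integrable_comp_emb hemb).mpr hGint
  constructor
  · exact (integrable_indicator_iff (measurableSet_monSet A)).mp hIE
  · rw [← integral_indicator (measurableSet_monSet A), hind, ← hcomp,
      hmp.integral_comp hemb, hG]
    erw [MeasureTheory.integral_fintype_prod_eq_prod (ι := Fin n) (fun i => gfun A b i) (μ := fun _ => volume)]
    simp only [integral_gfun A hA hb]
    rw [Finset.prod_mul_distrib, Finset.prod_mul_distrib]
    have h1 : ∏ i, b ^ (-(A i + 1)/2) = b ^ (-(monDim A)/2) := by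
      simp only [Real.rpow_def_of_pos hb, ← Real.exp_sum, ← Finset.mul_sum]
      rw [monDim]
      congr 1
      rw [← Finset.sum_div, Finset.sum_neg_distrib, Finset.sum_add_distrib]
      simp [add_comm]
    have h2 : (∏ i, if 0 < A i then (1/2:ℝ) else 1) = (2 ^ monK A : ℝ)⁻¹ := by
      rw [Finset.prod_ite, Finset.prod_const, Finset.prod_const, one_pow, mul_one, monK_eq]
      simp [div_pow]
    rw [h1, h2]
    ring

lemma entropy_pointwise {p g w : ℝ} (hp : 0 ≤ p) (hg : 0 < g) (hw : 0 ≤ w) :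
    (Real.log g * p - p * Real.log p) * w ≤ (g - p) * w := by
  refine mul_le_mul_of_nonneg_right ?_ hw
  rcases eq_or_lt_of_le hp with h | h
  · simp only [← h, mul_zero, zero_mul, sub_zero, sub_self]
    linarith
  · have h2 := Real.log_le_sub_one_of_pos (div_pos hg h)
    rw [Real.log_div hg.ne' h.ne'] at h2
    have h3 : p * (Real.log g - Real.log p) ≤ p * (g / p - 1) :=
      mul_le_mul_of_nonneg_left h2 h.le
    have h4 : p * (g / p) = g := by field_simp
    rw [mul_sub] at h3
    nlinarith [h3, h4]

lemma monWeight_nonneg {n : ℕ} (A : Fin n → ℝ) (x : EuclideanSpace ℝ (Fin n)) :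
    0 ≤ monWeight A x :=
  Finset.prod_nonneg fun i _ => Real.rpow_nonneg (abs_nonneg _) _

lemma volume_zero_singleton {n : ℕ} (hn : 0 < n) :
    (volume : Measure (EuclideanSpace ℝ (Fin n))) {0} = 0 := by
  have h := (EuclideanSpace.volume_preserving_symm_measurableEquiv_toLp (Fin n)).symm
  rw [← h.measure_preimage (by measurability)]
  have h1 : ((MeasurableEquiv.toLp 2 (Fin n → ℝ)).symm).symm ⁻¹' {0} = {fun _ => 0} := by
    ext y; simp [MeasurableEquiv.symm]; constructor
    · intro h'; funext i; exact congrFun (congrArg (fun z => (z : Fin n → ℝ)) h') i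
    · intro h'; subst h'; rfl
  rw [h1, show ({fun _ => (0:ℝ)} : Set (Fin n → ℝ)) = Set.pi Set.univ (fun _ => ({0} : Set ℝ))
      by ext y; simp [funext_iff], volume_pi_pi]
  exact Finset.prod_eq_zero (Finset.mem_univ (⟨0, hn⟩ : Fin n)) (by simp)

/-- the `L²` Shannon type inequality with monomial weights.
(Recall `Real.log 0 = 0`, so `|f|² log |f|²` vanishes where `f = 0`.) -/
theorem shannon_L2_monomial_weight {n : ℕ} (hn : 0 < n) (A : Fin n → ℝ) (hA : ∀ i, 0 ≤ A i)
    (f : EuclideanSpace ℝ (Fin n) → ℝ) (hf : Measurable f)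
    (hnorm : ∫ x in monSet A, f x ^ 2 * monWeight A x = 1)
    (hmom : IntegrableOn (fun x => f x ^ 2 * ‖x‖ ^ 2 * monWeight A x) (monSet A))
    (hent : IntegrableOn (fun x => f x ^ 2 * log (f x ^ 2) * monWeight A x) (monSet A)) :
    -∫ x in monSet A, f x ^ 2 * log (f x ^ 2) * monWeight A x ≤
      monDim A / 2 *
        log (2 * monPi A * exp 1 / monDim A *
          ∫ x in monSet A, f x ^ 2 * ‖x‖ ^ 2 * monWeight A x) := by
  have hs := measurableSet_monSet A
  set s := monSet A with hsdef
  set M := ∫ x in s, f x ^ 2 * ‖x‖ ^ 2 * monWeight A x with hMdef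
  set Ent := ∫ x in s, f x ^ 2 * log (f x ^ 2) * monWeight A x with hEdef
  have hD : 0 < monDim A := by
    rw [monDim]
    have h1 : (0:ℝ) ≤ ∑ i, A i := Finset.sum_nonneg fun i _ => hA i
    have h2 : (1:ℝ) ≤ (Fintype.card (Fin n) : ℝ) := by
      simp only [Fintype.card_fin]
      exact_mod_cast hn
    linarith
  -- positivity of second moment
  have hM0 : 0 ≤ M := setIntegral_nonneg hs fun x _ =>
    mul_nonneg (mul_nonneg (sq_nonneg _) (sq_nonneg _)) (monWeight_nonneg A x)
  have hMpos : 0 < M := by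
    rcases hM0.lt_or_eq with h | h
    · exact h
    exfalso
    have hae : (fun x => f x ^ 2 * ‖x‖ ^ 2 * monWeight A x) =ᵐ[volume.restrict s] 0 :=
      (integral_eq_zero_iff_of_nonneg
        (fun x => mul_nonneg (mul_nonneg (sq_nonneg _) (sq_nonneg _)) (monWeight_nonneg A x))
        hmom).mp h.symm
    have hne : ∀ᵐ x ∂(volume.restrict s), x ≠ (0 : EuclideanSpace ℝ (Fin n)) := by
      rw [ae_iff]
      refine measure_mono_null (t := ({0} : Set (EuclideanSpace ℝ (Fin n))))
        (fun x hx => by simpa using hx) (le_zero_iff.mp ?_)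
      exact (Measure.restrict_apply_le s {0}).trans (volume_zero_singleton hn).le
    have hae2 : (fun x => f x ^ 2 * monWeight A x) =ᵐ[volume.restrict s] 0 := by
      filter_upwards [hae, hne] with x hx hx0
      simp only [Pi.zero_apply] at hx ⊢
      rcases mul_eq_zero.mp hx with h' | h'
      · rcases mul_eq_zero.mp h' with h'' | h''
        · rw [h'', zero_mul]
        · exact absurd h'' (pow_ne_zero 2 (norm_ne_zero_iff.mpr hx0))
      · rw [h', mul_zero]
    have := integral_eq_zero_of_ae hae2
    rw [hnorm] at this
    exact one_ne_zero this
  -- set up the Gaussian comparison density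
  set b := monDim A / (2 * M) with hbdef
  have hb : 0 < b := div_pos hD (by linarith)
  obtain ⟨hgi, hgv⟩ := gauss_mon A hA hb
  set G := (∏ i, Gamma ((A i + 1) / 2)) / 2 ^ monK A with hGdef
  have hGpos : 0 < G := div_pos
    (Finset.prod_pos fun i _ => Gamma_pos_of_pos (by linarith [hA i])) (by positivity)
  set Z := b ^ (-(monDim A) / 2) * G with hZdef
  have hZpos : 0 < Z := mul_pos (rpow_pos_of_pos hb _) hGpos
  have h1 : IntegrableOn (fun x => f x ^ 2 * monWeight A x) s := by
    by_contra h
    rw [MeasureTheory.integral_undef h] at hnorm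
    exact zero_ne_one hnorm
  -- the two sides of the pointwise entropy inequality
  set gauss : EuclideanSpace ℝ (Fin n) → ℝ := fun x => Z⁻¹ * exp (-b * ‖x‖ ^ 2) with hgauss
  have hlogg : ∀ x, log (gauss x) = -log Z + (-b * ‖x‖ ^ 2) := by
    intro x
    rw [hgauss, log_mul (inv_ne_zero hZpos.ne') (exp_ne_zero _), log_inv, log_exp]
  have hLint : IntegrableOn
      (fun x => (log (gauss x) * f x ^ 2 - f x ^ 2 * log (f x ^ 2)) * monWeight A x) s := by
    refine (((h1.const_mul (-log Z)).sub (hmom.const_mul b)).sub hent).congr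
      (Filter.Eventually.of_forall fun x => ?_)
    simp only [Pi.sub_apply]
    rw [hlogg x]
    ring
  have hRint : IntegrableOn
      (fun x => (gauss x - f x ^ 2) * monWeight A x) s := by
    refine ((hgi.const_mul Z⁻¹).sub h1).congr (Filter.Eventually.of_forall fun x => ?_)
    simp only [Pi.sub_apply, hgauss]
    ring
  have key : ∫ x in s, (log (gauss x) * f x ^ 2 - f x ^ 2 * log (f x ^ 2)) * monWeight A x
      ≤ ∫ x in s, (gauss x - f x ^ 2) * monWeight A x := by
    refine setIntegral_mono_on hLint hRint hs fun x _ => ?_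
    exact entropy_pointwise (sq_nonneg _) (mul_pos (inv_pos.mpr hZpos) (exp_pos _))
      (monWeight_nonneg A x)
  -- evaluate the right-hand side : it equals 0
  have hR : ∫ x in s, (gauss x - f x ^ 2) * monWeight A x = 0 := by
    have e1 : ∫ x in s, (gauss x - f x ^ 2) * monWeight A x
        = ∫ x in s, (Z⁻¹ * (exp (-b * ‖x‖ ^ 2) * monWeight A x) - f x ^ 2 * monWeight A x) := by
      refine setIntegral_congr_fun hs fun x _ => ?_
      simp only [hgauss]; ring
    rw [e1, integral_sub ((hgi.const_mul Z⁻¹)) h1, integral_const_mul, hgv, hnorm,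
      inv_mul_cancel₀ hZpos.ne']
    ring
  -- evaluate the left-hand side
  have hL : ∫ x in s, (log (gauss x) * f x ^ 2 - f x ^ 2 * log (f x ^ 2)) * monWeight A x
      = -log Z - b * M - Ent := by
    have e1 : ∫ x in s, (log (gauss x) * f x ^ 2 - f x ^ 2 * log (f x ^ 2)) * monWeight A x
        = ∫ x in s, ((-log Z) * (f x ^ 2 * monWeight A x)
            - b * (f x ^ 2 * ‖x‖ ^ 2 * monWeight A x)
            - f x ^ 2 * log (f x ^ 2) * monWeight A x) := by
      refine setIntegral_congr_fun hs fun x _ => ?_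
      rw [hlogg x]; ring
    have i1 : ∫ x in s, (-log Z) * (f x ^ 2 * monWeight A x) = -log Z := by
      rw [integral_const_mul, hnorm, mul_one]
    have i2 : ∫ x in s, b * (f x ^ 2 * ‖x‖ ^ 2 * monWeight A x) = b * M := by
      rw [integral_const_mul, ← hMdef]
    have h12 : IntegrableOn (fun x => -log Z * (f x ^ 2 * monWeight A x)
        - b * (f x ^ 2 * ‖x‖ ^ 2 * monWeight A x)) s :=
      ((h1.const_mul (-log Z)).sub (hmom.const_mul b)).congr
        (Filter.Eventually.of_forall fun x => rfl)
    rw [e1, integral_sub h12 hent]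
    rw [integral_sub (h1.const_mul (-log Z)) (hmom.const_mul b)]
    rw [i1, i2, ← hEdef]
  have hmain : -Ent ≤ log Z + b * M := by
    rw [hL, hR] at key
    linarith
  -- final computation
  have hbM : b * M = monDim A / 2 := by
    rw [hbdef]
    field_simp
  have hPi : monPi A = G ^ (2 / monDim A) := by rw [monPi, hGdef]
  have hPipos : 0 < monPi A := by
    rw [hPi]; exact rpow_pos_of_pos hGpos _
  have hlogPi : log (monPi A) = 2 / monDim A * log G := by
    rw [hPi, Real.log_rpow hGpos]
  have hlogG : log G = monDim A / 2 * log (monPi A) := by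
    rw [hlogPi]
    field_simp
  have hlogZ : log Z = -(monDim A) / 2 * log b + log G := by
    rw [hZdef, log_mul (rpow_pos_of_pos hb _).ne' hGpos.ne', Real.log_rpow hb]
  have harg : 2 * monPi A * exp 1 / monDim A * M = monPi A * exp 1 * b⁻¹ := by
    rw [hbdef]
    field_simp
  have hlogarg : log (2 * monPi A * exp 1 / monDim A * M)
      = log (monPi A) + 1 - log b := by
    rw [harg, log_mul (mul_pos hPipos (exp_pos 1)).ne' (inv_pos.mpr hb).ne',
      log_mul hPipos.ne' (exp_pos 1).ne', log_exp, log_inv]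
    ring
  rw [hlogarg]
  calc -Ent ≤ log Z + b * M := hmain
    _ = monDim A / 2 * (log (monPi A) + 1 - log b) := by
        rw [hlogZ, hlogG, hbM]; ring
end
end

section
/- Let A = (A_1,…,A_n) be a nonnegative vector in ℝ^n and D = n + A_1 + ⋯ + A_n. Then for every α > 0 and t > 0, ∫_{ℝ^n_A} e^{−t|x|^α} |x|^α x^A dx = (D/α) · t^{−D/α − 1} · ( Γ(D/α + 1)/Γ(D/2 + 1) ) · Π(A)^{D/2}. -/
open MeasureTheory Real Filter

noncomputable section

open Set
open scoped ENNReal NNReal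

namespace MonAux

lemma rpow_finset_sum {x : ℝ} (hx : 0 < x) {ι : Type*} (s : Finset ι) (f : ι → ℝ) :
    x ^ (∑ i ∈ s, f i) = ∏ i ∈ s, x ^ f i := by
  classical
  induction s using Finset.induction with
  | empty => simp
  | insert _ _ h ih => rw [Finset.sum_insert h, Real.rpow_add hx, ih, Finset.prod_insert h]

variable {n : ℕ} (A : Fin n → ℝ)

/-- the 1-D factor -/
def phi (i : Fin n) : ℝ → ℝ := fun u =>
  (if 0 < A i then Set.indicator (Set.Ioi 0) (fun _ => (1:ℝ)) u else 1) *
    (|u| ^ A i * exp (-(u ^ 2)))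

def realC : ℝ := (∏ i, Gamma ((A i + 1) / 2)) / 2 ^ monK A

def muA : Measure (EuclideanSpace ℝ (Fin n)) :=
  (volume.restrict (monSet A)).withDensity fun x => ENNReal.ofReal (monWeight A x)

def nuDen : Measure ℝ :=
  (volume.restrict (Ioi 0)).withDensity fun r => ENNReal.ofReal (monDim A * r ^ (monDim A - 1))

lemma measurableSet_monSet : MeasurableSet (monSet A) := by
  have : monSet A = ⋂ i, {x : EuclideanSpace ℝ (Fin n) | 0 < A i → 0 < x i} := by
    ext x; simp [monSet, Set.mem_iInter]
  rw [this]
  refine MeasurableSet.iInter fun i => ?_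
  by_cases h : 0 < A i
  · simp only [h, forall_true_left]
    exact measurableSet_lt measurable_const
      ((EuclideanSpace.proj (𝕜 := ℝ) i).continuous.measurable)
  · simp [h]

lemma monWeight_nonneg (x : EuclideanSpace ℝ (Fin n)) : 0 ≤ monWeight A x :=
  Finset.prod_nonneg fun i _ => Real.rpow_nonneg (abs_nonneg _) _

lemma measurable_monWeight : Measurable (monWeight A) := by
  apply Finset.measurable_prod
  intro i _
  have h1 : Measurable fun x : EuclideanSpace ℝ (Fin n) => x i :=
    (EuclideanSpace.proj (𝕜 := ℝ) i).continuous.measurable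
  fun_prop

lemma monK_eq : monK A = (Finset.univ.filter (fun i => 0 < A i)).card := by
  classical
  rw [monK, Nat.card_eq_fintype_card, Fintype.card_subtype]

variable (hA : ∀ i, 0 ≤ A i)

lemma phi_pos_eq (i : Fin n) (h : 0 < A i) :
    phi A i = Set.indicator (Set.Ioi 0) (fun u => |u| ^ A i * exp (-(u ^ 2))) := by
  funext u
  by_cases hu : u ∈ Set.Ioi (0:ℝ) <;>
    simp [phi, if_pos h, Set.indicator_of_mem, Set.indicator_of_notMem, hu]

include hA in
lemma integrable_phi (i : Fin n) : Integrable (phi A i) := by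
  by_cases h : 0 < A i
  · rw [phi_pos_eq A i h, integrable_indicator_iff measurableSet_Ioi]
    refine ((integrable_rpow_mul_exp_neg_mul_sq one_pos
      (by linarith [hA i] : (-1:ℝ) < A i)).integrableOn).congr_fun (fun u hu => ?_)
      measurableSet_Ioi
    rw [abs_of_pos (by exact hu)]; simp only [neg_one_mul]
  · have hz : A i = 0 := le_antisymm (not_lt.1 h) (hA i)
    have e : phi A i = fun u : ℝ => exp (-1 * u ^ 2) := by
      funext u; simp [phi, hz, lt_irrefl, neg_one_mul]
    rw [e]; exact integrable_exp_neg_mul_sq one_pos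

include hA in
lemma integral_phi (i : Fin n) :
    ∫ u, phi A i u = Gamma ((A i + 1) / 2) * (if 0 < A i then (2:ℝ)⁻¹ else 1) := by
  by_cases h : 0 < A i
  · rw [phi_pos_eq A i h, if_pos h, integral_indicator measurableSet_Ioi]
    rw [show ∫ u in Set.Ioi (0:ℝ), |u| ^ A i * exp (-(u ^ 2))
        = ∫ u in Set.Ioi (0:ℝ), u ^ A i * exp (-u ^ (2:ℝ)) from
      setIntegral_congr_fun measurableSet_Ioi (fun u hu => by
        rw [abs_of_pos (by exact hu),
          show ((2:ℝ)) = ((2:ℕ):ℝ) by norm_num, Real.rpow_natCast])]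
    rw [integral_rpow_mul_exp_neg_rpow two_pos (by linarith [hA i])]
    ring
  · have hz : A i = 0 := le_antisymm (not_lt.1 h) (hA i)
    have e : phi A i = fun u : ℝ => exp (-1 * u ^ 2) := by
      funext u; simp [phi, hz, lt_irrefl, neg_one_mul]
    rw [e, integral_gaussian, hz]
    norm_num [Real.Gamma_one_half_eq]

include hA in
lemma realC_pos : 0 < realC A := by
  apply div_pos (Finset.prod_pos fun i _ => Real.Gamma_pos_of_pos (by linarith [hA i]))
    (pow_pos two_pos _)

include hA in
lemma prod_integral_phi : (∏ i, ∫ u, phi A i u) = realC A := by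
  classical
  calc (∏ i, ∫ u, phi A i u)
      = ∏ i, Gamma ((A i + 1) / 2) * (if 0 < A i then (2:ℝ)⁻¹ else 1) := by
        exact Finset.prod_congr rfl fun i _ => integral_phi A hA i
    _ = (∏ i, Gamma ((A i + 1) / 2)) * ∏ i, (if 0 < A i then (2:ℝ)⁻¹ else 1) :=
        Finset.prod_mul_distrib
    _ = realC A := by
        rw [realC, div_eq_mul_inv]
        congr 1
        rw [Finset.prod_ite, Finset.prod_const, Finset.prod_const_one, mul_one,
          monK_eq, ← inv_pow]

lemma comp_eq (y : Fin n → ℝ) :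
    Set.indicator (monSet A)
        (fun x : EuclideanSpace ℝ (Fin n) => exp (-(‖x‖ ^ 2)) * monWeight A x)
        ((MeasurableEquiv.toLp 2 (Fin n → ℝ)).symm.symm y) = ∏ i, phi A i (y i) := by
  classical
  set x : EuclideanSpace ℝ (Fin n) := (MeasurableEquiv.toLp 2 (Fin n → ℝ)).symm.symm y with hx
  have hcoord : ∀ i, x i = y i := fun i => rfl
  have hnorm : ‖x‖ ^ 2 = ∑ i, (y i) ^ 2 := by
    rw [EuclideanSpace.norm_eq, sq_sqrt (Finset.sum_nonneg fun i _ => sq_nonneg _)]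
    simp [hcoord, sq_abs]
  by_cases hy : x ∈ monSet A
  · rw [Set.indicator_of_mem hy]
    have h1 : ∀ i ∈ Finset.univ, phi A i (y i)
        = |y i| ^ A i * exp (-((y i) ^ 2)) := by
      intro i _
      by_cases h : 0 < A i
      · have : (0:ℝ) < y i := by rw [← hcoord]; exact hy i h
        simp [phi, h, Set.indicator_of_mem (Set.mem_Ioi.2 this)]
      · simp [phi, h]
    rw [Finset.prod_congr rfl h1, Finset.prod_mul_distrib, ← Real.exp_sum]
    rw [hnorm, monWeight]
    simp only [hcoord]
    rw [mul_comm, ← Finset.sum_neg_distrib]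
  · rw [Set.indicator_of_notMem hy]
    obtain ⟨i, hi, hyi⟩ : ∃ i, 0 < A i ∧ ¬0 < y i := by
      simpa [monSet, Set.mem_setOf_eq, not_forall, hcoord] using hy
    symm
    apply Finset.prod_eq_zero (Finset.mem_univ i)
    simp [phi, hi, Set.indicator_of_notMem, hyi]

include hA in
lemma gauss_integrable :
    IntegrableOn (fun x : EuclideanSpace ℝ (Fin n) => exp (-(‖x‖ ^ 2)) * monWeight A x)
      (monSet A) volume := by
  apply (integrable_indicator_iff (measurableSet_monSet A)).mp
  · have hmp := (EuclideanSpace.volume_preserving_symm_measurableEquiv_toLp (Fin n)).symm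
    rw [← MeasurePreserving.integrable_comp_emb hmp (MeasurableEquiv.measurableEmbedding _)]
    have : (Set.indicator (monSet A)
        (fun x : EuclideanSpace ℝ (Fin n) => exp (-(‖x‖ ^ 2)) * monWeight A x))
        ∘ (MeasurableEquiv.toLp 2 (Fin n → ℝ)).symm.symm = fun y => ∏ i, phi A i (y i) := by
      funext y; exact comp_eq A y
    rw [this]
    exact Integrable.fintype_prod fun i => integrable_phi A hA i

include hA in
lemma gauss_value :
    ∫ x in monSet A, exp (-(‖x‖ ^ 2)) * monWeight A x = realC A := by
  rw [← integral_indicator (measurableSet_monSet A)]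
  have hmp := (EuclideanSpace.volume_preserving_symm_measurableEquiv_toLp (Fin n)).symm
  rw [← MeasurePreserving.integral_comp hmp (MeasurableEquiv.measurableEmbedding _)]
  calc ∫ y : Fin n → ℝ, Set.indicator (monSet A)
          (fun x : EuclideanSpace ℝ (Fin n) => exp (-(‖x‖ ^ 2)) * monWeight A x)
          ((MeasurableEquiv.toLp 2 (Fin n → ℝ)).symm.symm y)
      = ∫ y : Fin n → ℝ, ∏ i, phi A i (y i) := by
        congr 1; funext y; exact comp_eq A y
    _ = ∏ i, ∫ u, phi A i u := by
        rw [MeasureTheory.integral_fintype_prod_volume_eq_prod]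
    _ = realC A := prod_integral_phi A hA

lemma monWeight_smul {r : ℝ} (hr : 0 < r) (x : EuclideanSpace ℝ (Fin n)) :
    monWeight A (r • x) = r ^ (∑ i, A i) * monWeight A x := by
  simp only [monWeight]
  rw [rpow_finset_sum hr, ← Finset.prod_mul_distrib]
  refine Finset.prod_congr rfl fun i _ => ?_
  have : (r • x) i = r * x i := rfl
  rw [this, abs_mul, Real.mul_rpow (abs_nonneg _) (abs_nonneg _), abs_of_pos hr]

lemma smul_mem_monSet {r : ℝ} (hr : 0 < r) (x : EuclideanSpace ℝ (Fin n)) :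
    r • x ∈ monSet A ↔ x ∈ monSet A := by
  constructor <;> intro h i hi
  · have := h i hi
    have hx : (r • x) i = r * x i := rfl
    rw [hx] at this
    nlinarith
  · have hx : (r • x) i = r * x i := rfl
    rw [hx]; exact mul_pos hr (h i hi)

lemma muA_closedBall (r : ℝ) (hr : 0 < r) :
    muA A {x | ‖x‖ ≤ r} = ENNReal.ofReal (r ^ monDim A) * muA A {x | ‖x‖ ≤ 1} := by
  classical
  have hSm : ∀ s : ℝ, MeasurableSet {x : EuclideanSpace ℝ (Fin n) | ‖x‖ ≤ s} :=
    fun s => measurable_norm measurableSet_Iic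
  -- express as an indicator lintegral
  have key : ∀ s : ℝ, muA A {x | ‖x‖ ≤ s} =
      ∫⁻ x, Set.indicator ({x | ‖x‖ ≤ s} ∩ monSet A)
        (fun x => ENNReal.ofReal (monWeight A x)) x ∂volume := by
    intro s
    rw [muA, withDensity_apply _ (hSm s), Measure.restrict_restrict (hSm s),
      ← lintegral_indicator ((hSm s).inter (measurableSet_monSet A))]
  rw [key r, key 1]
  -- change of variables x = r • y
  have hmeasF : Measurable (Set.indicator ({x : EuclideanSpace ℝ (Fin n) | ‖x‖ ≤ r} ∩ monSet A)
      (fun x => ENNReal.ofReal (monWeight A x))) :=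
    (ENNReal.measurable_ofReal.comp (measurable_monWeight A)).indicator
      ((hSm r).inter (measurableSet_monSet A))
  have hmap := Measure.map_addHaar_smul (volume : Measure (EuclideanSpace ℝ (Fin n))) hr.ne'
  have step : ∫⁻ y, (Set.indicator ({x : EuclideanSpace ℝ (Fin n) | ‖x‖ ≤ r} ∩ monSet A)
        (fun x => ENNReal.ofReal (monWeight A x))) (r • y) ∂volume
      = ENNReal.ofReal (|((r : ℝ) ^ (Module.finrank ℝ (EuclideanSpace ℝ (Fin n))))⁻¹|) *
        ∫⁻ x, (Set.indicator ({x : EuclideanSpace ℝ (Fin n) | ‖x‖ ≤ r} ∩ monSet A)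
        (fun x => ENNReal.ofReal (monWeight A x))) x ∂volume := by
    rw [← smul_eq_mul, ← lintegral_smul_measure, ← hmap, lintegral_map hmeasF (measurable_const_smul r)]
  have hrn : (0:ℝ) < r ^ n := pow_pos hr n
  have hfr : ((r : ℝ) ^ (Module.finrank ℝ (EuclideanSpace ℝ (Fin n)))) = r ^ n := by
    rw [finrank_euclideanSpace_fin]
  rw [hfr, abs_of_pos (by positivity)] at step
  have main : ∫⁻ x, (Set.indicator ({x : EuclideanSpace ℝ (Fin n) | ‖x‖ ≤ r} ∩ monSet A)
        (fun x => ENNReal.ofReal (monWeight A x))) x ∂volume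
      = ENNReal.ofReal (r ^ n) *
        ∫⁻ y, (Set.indicator ({x : EuclideanSpace ℝ (Fin n) | ‖x‖ ≤ r} ∩ monSet A)
        (fun x => ENNReal.ofReal (monWeight A x))) (r • y) ∂volume := by
    rw [step, ← mul_assoc, ← ENNReal.ofReal_mul hrn.le, mul_inv_cancel₀ hrn.ne',
      ENNReal.ofReal_one, one_mul]
  rw [main]
  have hptwise : ∀ y : EuclideanSpace ℝ (Fin n),
      (Set.indicator ({x : EuclideanSpace ℝ (Fin n) | ‖x‖ ≤ r} ∩ monSet A)
        (fun x => ENNReal.ofReal (monWeight A x))) (r • y)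
      = Set.indicator ({x : EuclideanSpace ℝ (Fin n) | ‖x‖ ≤ 1} ∩ monSet A)
        (fun y => ENNReal.ofReal (r ^ (∑ i, A i)) * ENNReal.ofReal (monWeight A y)) y := by
    intro y
    have hnorm : ‖r • y‖ = r * ‖y‖ := by rw [norm_smul, Real.norm_eq_abs, abs_of_pos hr]
    have hiff : r • y ∈ {x : EuclideanSpace ℝ (Fin n) | ‖x‖ ≤ r} ∩ monSet A ↔
        y ∈ {x : EuclideanSpace ℝ (Fin n) | ‖x‖ ≤ 1} ∩ monSet A := by
      constructor <;> rintro ⟨h1, h2⟩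
      · refine ⟨?_, (smul_mem_monSet A hr y).1 h2⟩
        have : r * ‖y‖ ≤ r := by rwa [← hnorm]
        exact le_of_mul_le_mul_left (by linarith) hr
      · refine ⟨?_, (smul_mem_monSet A hr y).2 h2⟩
        simp only [Set.mem_setOf_eq, hnorm]
        calc r * ‖y‖ ≤ r * 1 := by
              exact mul_le_mul_of_nonneg_left h1 hr.le
          _ = r := mul_one r
    by_cases hy : y ∈ {x : EuclideanSpace ℝ (Fin n) | ‖x‖ ≤ 1} ∩ monSet A
    · rw [Set.indicator_of_mem (hiff.2 hy), Set.indicator_of_mem hy, monWeight_smul A hr,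
        ENNReal.ofReal_mul (Real.rpow_nonneg hr.le _)]
    · rw [Set.indicator_of_notMem (fun h => hy (hiff.1 h)), Set.indicator_of_notMem hy]
  calc ENNReal.ofReal (r ^ n) *
        ∫⁻ y, (Set.indicator ({x : EuclideanSpace ℝ (Fin n) | ‖x‖ ≤ r} ∩ monSet A)
        (fun x => ENNReal.ofReal (monWeight A x))) (r • y) ∂volume
      = ENNReal.ofReal (r ^ n) * ∫⁻ y, Set.indicator
          ({x : EuclideanSpace ℝ (Fin n) | ‖x‖ ≤ 1} ∩ monSet A)
          (fun y => ENNReal.ofReal (r ^ (∑ i, A i)) * ENNReal.ofReal (monWeight A y)) y ∂volume := by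
        congr 1; exact lintegral_congr hptwise
    _ = ENNReal.ofReal (r ^ n) * (ENNReal.ofReal (r ^ (∑ i, A i)) *
          ∫⁻ y, Set.indicator ({x : EuclideanSpace ℝ (Fin n) | ‖x‖ ≤ 1} ∩ monSet A)
          (fun y => ENNReal.ofReal (monWeight A y)) y ∂volume) := by
        rw [lintegral_indicator (((hSm 1)).inter (measurableSet_monSet A)),
          lintegral_indicator (((hSm 1)).inter (measurableSet_monSet A)),
          lintegral_const_mul' _ _ ENNReal.ofReal_ne_top]
    _ = ENNReal.ofReal (r ^ monDim A) *
          ∫⁻ y, Set.indicator ({x : EuclideanSpace ℝ (Fin n) | ‖x‖ ≤ 1} ∩ monSet A)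
          (fun y => ENNReal.ofReal (monWeight A y)) y ∂volume := by
        rw [← mul_assoc, ← ENNReal.ofReal_mul hrn.le]
        congr 2
        rw [← Real.rpow_natCast r n, ← Real.rpow_add hr, monDim, Fintype.card_fin]
    _ = _ := rfl

variable (hn : 0 < n)
include hA hn

lemma monDim_pos : 0 < monDim A := by
  have : (1:ℝ) ≤ (n:ℝ) := by exact_mod_cast hn
  have h2 : 0 ≤ ∑ i, A i := Finset.sum_nonneg fun i _ => hA i
  simp only [monDim, Fintype.card_fin]
  linarith

lemma monDim_one_le : 1 ≤ monDim A := by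
  have : (1:ℝ) ≤ (n:ℝ) := by exact_mod_cast hn
  have h2 : 0 ≤ ∑ i, A i := Finset.sum_nonneg fun i _ => hA i
  simp only [monDim, Fintype.card_fin]
  linarith

lemma lint_Ioc {a b : ℝ} (ha : 0 ≤ a) (hab : a ≤ b) :
    ∫⁻ r in Ioc a b, ENNReal.ofReal (monDim A * r ^ (monDim A - 1)) =
      ENNReal.ofReal (b ^ monDim A - a ^ monDim A) := by
  have hD := monDim_pos A hA hn
  have hcont : Continuous fun r : ℝ => monDim A * r ^ (monDim A - 1) :=
    continuous_const.mul (Real.continuous_rpow_const (by linarith [monDim_one_le A hA hn]))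
  have hint : IntegrableOn (fun r => monDim A * r ^ (monDim A - 1)) (Ioc a b) volume :=
    hcont.integrableOn_Ioc
  have hnn : 0 ≤ᵐ[volume.restrict (Ioc a b)] fun r => monDim A * r ^ (monDim A - 1) := by
    refine (ae_restrict_iff' measurableSet_Ioc).2 (Eventually.of_forall fun r hr => ?_)
    exact mul_nonneg hD.le (Real.rpow_nonneg (le_of_lt (lt_of_le_of_lt ha hr.1)) _)
  rw [← ofReal_integral_eq_lintegral_ofReal hint hnn]
  congr 1
  rw [← intervalIntegral.integral_of_le hab, intervalIntegral.integral_const_mul,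
    integral_rpow (Or.inl (by linarith [monDim_one_le A hA hn])),
    show monDim A - 1 + 1 = monDim A by ring, mul_div_cancel₀ _ hD.ne']

lemma lint_gauss :
    ∫⁻ x, ENNReal.ofReal (exp (-(‖x‖ ^ 2))) ∂(muA A) = ENNReal.ofReal (realC A) := by
  rw [muA, lintegral_withDensity_eq_lintegral_mul (volume.restrict (monSet A))
    (f := fun x => ENNReal.ofReal (monWeight A x))
    ((measurable_monWeight A).ennreal_ofReal)
    (by fun_prop : Measurable fun x : EuclideanSpace ℝ (Fin n) =>
        ENNReal.ofReal (exp (-(‖x‖ ^ 2))))]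
  simp only [Pi.mul_apply]
  have heq : ∀ x : EuclideanSpace ℝ (Fin n),
      ENNReal.ofReal (monWeight A x) * ENNReal.ofReal (exp (-(‖x‖ ^ 2)))
      = ENNReal.ofReal (exp (-(‖x‖ ^ 2)) * monWeight A x) := by
    intro x
    rw [← ENNReal.ofReal_mul (monWeight_nonneg A x), mul_comm]
  rw [lintegral_congr heq,
    ← ofReal_integral_eq_lintegral_ofReal (gauss_integrable A hA)
      (Eventually.of_forall fun x => mul_nonneg (exp_pos _).le (monWeight_nonneg A x)),
    gauss_value A hA]

lemma muA_singleton_zero : muA A {x : EuclideanSpace ℝ (Fin n) | ‖x‖ ≤ (0:ℝ)} = 0 := by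
  have hs : {x : EuclideanSpace ℝ (Fin n) | ‖x‖ ≤ (0:ℝ)} = {0} := by
    ext x; simp [norm_le_zero_iff]
  rw [hs]
  haveI : Nonempty (Fin n) := Fin.pos_iff_nonempty.mp hn
  have hz : volume ({0} : Set (EuclideanSpace ℝ (Fin n))) = 0 := measure_singleton 0
  calc muA A {0} = ∫⁻ x in {0}, ENNReal.ofReal (monWeight A x) ∂(volume.restrict (monSet A)) := by
        rw [muA, withDensity_apply _ (measurableSet_singleton 0)]
    _ = 0 := by
        have h0 : (volume.restrict (monSet A)).restrict {0} = 0 := by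
          rw [Measure.restrict_eq_zero]
          exact le_antisymm (le_trans (Measure.restrict_apply_le _ _) hz.le) zero_le
        rw [h0, lintegral_zero_measure]

lemma muA_ball' {r : ℝ} (hr : 0 ≤ r) :
    muA A {x | ‖x‖ ≤ r} = ENNReal.ofReal (r ^ monDim A) * muA A {x | ‖x‖ ≤ 1} := by
  rcases lt_or_eq_of_le hr with h | h
  · exact muA_closedBall A r h
  · rw [← h, muA_singleton_zero A hA hn, Real.zero_rpow (monDim_pos A hA hn).ne', ENNReal.ofReal_zero,
      zero_mul]

lemma VA_ne_top : muA A {x : EuclideanSpace ℝ (Fin n) | ‖x‖ ≤ (1:ℝ)} ≠ ⊤ := by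
  have hSm : MeasurableSet {x : EuclideanSpace ℝ (Fin n) | ‖x‖ ≤ (1:ℝ)} :=
    measurable_norm measurableSet_Iic
  have step1 : muA A {x | ‖x‖ ≤ (1:ℝ)} ≤
      ∫⁻ x in {x : EuclideanSpace ℝ (Fin n) | ‖x‖ ≤ (1:ℝ)},
        ENNReal.ofReal (exp 1) * ENNReal.ofReal (exp (-(‖x‖ ^ 2))) ∂(muA A) := by
    rw [← setLIntegral_one]
    refine setLIntegral_mono (by fun_prop) fun x hx => ?_
    rw [← ENNReal.ofReal_one, ← ENNReal.ofReal_mul (exp_pos 1).le, ← Real.exp_add]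
    refine ENNReal.ofReal_le_ofReal (one_le_exp ?_)
    have : ‖x‖ ^ 2 ≤ 1 := by
      have h0 : (0:ℝ) ≤ ‖x‖ := norm_nonneg _
      have h1 : ‖x‖ ≤ 1 := hx
      nlinarith
    linarith
  have step2 : ∫⁻ x in {x : EuclideanSpace ℝ (Fin n) | ‖x‖ ≤ (1:ℝ)},
        ENNReal.ofReal (exp 1) * ENNReal.ofReal (exp (-(‖x‖ ^ 2))) ∂(muA A)
      ≤ ENNReal.ofReal (exp 1) * ∫⁻ x, ENNReal.ofReal (exp (-(‖x‖ ^ 2))) ∂(muA A) := by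
    rw [lintegral_const_mul' _ _ ENNReal.ofReal_ne_top]
    exact mul_le_mul_right (setLIntegral_le_lintegral _ _) _
  refine ne_top_of_le_ne_top ?_ (step1.trans step2)
  rw [lint_gauss A hA hn]
  exact ENNReal.mul_ne_top ENNReal.ofReal_ne_top ENNReal.ofReal_ne_top

lemma map_muA :
    Measure.map (fun x : EuclideanSpace ℝ (Fin n) => ‖x‖) (muA A) =
      (muA A {x | ‖x‖ ≤ (1:ℝ)}) • nuDen A := by
  have hD := monDim_pos A hA hn
  have hVtop := VA_ne_top A hA hn
  have hball : ∀ b : ℝ, muA A {x : EuclideanSpace ℝ (Fin n) | ‖x‖ ≤ b} ≠ ⊤ := by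
    intro b
    rcases le_or_gt b 0 with h | h
    · have hsub : {x : EuclideanSpace ℝ (Fin n) | ‖x‖ ≤ b} ⊆ {x | ‖x‖ ≤ (1:ℝ)} :=
        Set.setOf_subset_setOf.2 fun x hx => le_trans hx (by linarith)
      exact ne_top_of_le_ne_top hVtop (measure_mono hsub)
    · rw [muA_ball' A hA hn h.le]
      exact ENNReal.mul_ne_top ENNReal.ofReal_ne_top hVtop
  refine Measure.ext_of_Ioc' _ _ (fun a b hab => ?_) (fun a b hab => ?_)
  · rw [Measure.map_apply measurable_norm measurableSet_Ioc]
    have hsub : (fun x : EuclideanSpace ℝ (Fin n) => ‖x‖) ⁻¹' Ioc a b ⊆ {x | ‖x‖ ≤ b} :=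
      fun x hx => hx.2
    exact ne_top_of_le_ne_top (hball b) (measure_mono hsub)
  · rw [Measure.map_apply measurable_norm measurableSet_Ioc, Measure.smul_apply,
      smul_eq_mul, nuDen, withDensity_apply _ measurableSet_Ioc,
      Measure.restrict_restrict measurableSet_Ioc]
    by_cases hb : 0 < b
    · have hIoc : Ioc a b ∩ Ioi 0 = Ioc (max a 0) b := by
        ext r
        simp only [Set.mem_inter_iff, Set.mem_Ioc, Set.mem_Ioi, max_lt_iff]
        constructor
        · rintro ⟨⟨h1, h2⟩, h3⟩; exact ⟨⟨h1, h3⟩, h2⟩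
        · rintro ⟨⟨h1, h3⟩, h2⟩; exact ⟨⟨h1, h2⟩, h3⟩
      have hmaxb : max a 0 ≤ b := max_le hab.le hb.le
      rw [hIoc, lint_Ioc A hA hn (le_max_right a 0) hmaxb]
      rcases le_or_gt 0 a with ha | ha
      · -- 0 ≤ a < b
        have hmax : max a 0 = a := max_eq_left ha
        rw [hmax]
        have hpre : (fun x : EuclideanSpace ℝ (Fin n) => ‖x‖) ⁻¹' Ioc a b =
            {x : EuclideanSpace ℝ (Fin n) | ‖x‖ ≤ b} \ {x | ‖x‖ ≤ a} := by
          ext x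
          simp only [Set.mem_preimage, Set.mem_Ioc, Set.mem_diff, Set.mem_setOf_eq, not_le]
          tauto
        have hSmeas : ∀ s : ℝ, MeasurableSet {x : EuclideanSpace ℝ (Fin n) | ‖x‖ ≤ s} :=
          fun s => measurable_norm measurableSet_Iic
        have hsub' : {x : EuclideanSpace ℝ (Fin n) | ‖x‖ ≤ a} ⊆ {x | ‖x‖ ≤ b} :=
          Set.setOf_subset_setOf.2 fun x hx => le_trans hx hab.le
        rw [hpre, measure_diff hsub' ((hSmeas a).nullMeasurableSet) (hball a)]
        rw [muA_ball' A hA hn ha, muA_ball' A hA hn (le_trans ha hab.le)]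
        have haD : (0:ℝ) ≤ a ^ monDim A := Real.rpow_nonneg ha _
        have habD : a ^ monDim A ≤ b ^ monDim A :=
          Real.rpow_le_rpow ha hab.le hD.le
        refine (ENNReal.eq_sub_of_add_eq (ENNReal.mul_ne_top ENNReal.ofReal_ne_top hVtop) ?_).symm
        rw [mul_comm (muA A {x | ‖x‖ ≤ (1:ℝ)}) _, ← add_mul, ← ENNReal.ofReal_add
          (by linarith) haD, sub_add_cancel]
      · -- a < 0 < b
        have hmax : max a 0 = 0 := max_eq_right ha.le
        have hpre : (fun x : EuclideanSpace ℝ (Fin n) => ‖x‖) ⁻¹' Ioc a b =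
            {x : EuclideanSpace ℝ (Fin n) | ‖x‖ ≤ b} := by
          ext x
          simp only [Set.mem_preimage, Set.mem_Ioc, Set.mem_setOf_eq]
          exact ⟨fun h => h.2, fun h => ⟨lt_of_lt_of_le ha (norm_nonneg x), h⟩⟩
        rw [hpre, hmax, Real.zero_rpow hD.ne', sub_zero, muA_ball' A hA hn hb.le, mul_comm]
    · push_neg at hb
      have hIoc : Ioc a b ∩ Ioi 0 = ∅ := by
        ext r
        simp only [Set.mem_inter_iff, Set.mem_Ioc, Set.mem_Ioi, Set.mem_empty_iff_false,
          iff_false, not_and]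
        rintro ⟨h1, h2⟩ h3
        linarith
      rw [hIoc]
      simp only [Measure.restrict_empty, lintegral_zero_measure, mul_zero]
      refine measure_mono_null (fun x hx => ?_) (muA_singleton_zero A hA hn)
      exact le_trans hx.2 hb

lemma transfer (f : ℝ → ℝ) (hf : Measurable f) :
    ∫ x in monSet A, f ‖x‖ * monWeight A x =
      (muA A {x | ‖x‖ ≤ (1:ℝ)}).toReal *
        ∫ r in Ioi (0:ℝ), f r * (monDim A * r ^ (monDim A - 1)) := by
  have h1 : ∫ x in monSet A, f ‖x‖ * monWeight A x = ∫ x, f ‖x‖ ∂(muA A) := by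
    rw [muA]
    have hrfl : (fun x : EuclideanSpace ℝ (Fin n) => ENNReal.ofReal (monWeight A x))
        = fun x => ((monWeight A x).toNNReal : ℝ≥0∞) := rfl
    rw [hrfl, integral_withDensity_eq_integral_smul
      ((measurable_monWeight A).real_toNNReal) (fun x => f ‖x‖)]
    refine integral_congr_ae (Eventually.of_forall fun x => ?_)
    show f ‖x‖ * monWeight A x = (monWeight A x).toNNReal • f ‖x‖
    rw [NNReal.smul_def, smul_eq_mul, Real.coe_toNNReal _ (monWeight_nonneg A x), mul_comm]
  have h2 : ∫ x, f ‖x‖ ∂(muA A) =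
      ∫ r, f r ∂(Measure.map (fun x : EuclideanSpace ℝ (Fin n) => ‖x‖) (muA A)) :=
    (integral_map measurable_norm.aemeasurable hf.aestronglyMeasurable).symm
  rw [h1, h2, map_muA A hA hn, integral_smul_measure]
  congr 1
  rw [nuDen]
  have hrfl : (fun r : ℝ => ENNReal.ofReal (monDim A * r ^ (monDim A - 1)))
      = fun r => (((monDim A * r ^ (monDim A - 1)).toNNReal : ℝ≥0) : ℝ≥0∞) := rfl
  rw [hrfl, integral_withDensity_eq_integral_smul
    ((by fun_prop : Measurable fun r : ℝ => monDim A * r ^ (monDim A - 1)).real_toNNReal) f]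
  refine setIntegral_congr_fun measurableSet_Ioi fun r hr => ?_
  show (monDim A * r ^ (monDim A - 1)).toNNReal • f r = f r * (monDim A * r ^ (monDim A - 1))
  rw [eq_comm] at *
  rw [NNReal.smul_def, smul_eq_mul, Real.coe_toNNReal _
    (mul_nonneg (monDim_pos A hA hn).le (Real.rpow_nonneg (le_of_lt hr) _)), mul_comm]

lemma VA_toReal :
    (muA A {x : EuclideanSpace ℝ (Fin n) | ‖x‖ ≤ (1:ℝ)}).toReal =
      2 * realC A / (monDim A * Gamma (monDim A / 2)) := by
  have hD := monDim_pos A hA hn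
  have h := transfer A hA hn (fun r => exp (-(r ^ 2))) (by fun_prop)
  rw [gauss_value A hA] at h
  have hJ : ∫ r in Ioi (0:ℝ), exp (-(r ^ 2)) * (monDim A * r ^ (monDim A - 1))
      = monDim A * ((1/2) * Gamma (monDim A / 2)) := by
    have : ∀ r ∈ Ioi (0:ℝ), exp (-(r ^ 2)) * (monDim A * r ^ (monDim A - 1))
        = monDim A * (r ^ (monDim A - 1) * exp (-r ^ (2:ℝ))) := by
      intro r hr
      rw [show (2:ℝ) = ((2:ℕ):ℝ) by norm_num, Real.rpow_natCast]
      ring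
    rw [setIntegral_congr_fun measurableSet_Ioi this, integral_const_mul,
      integral_rpow_mul_exp_neg_rpow two_pos (by linarith [monDim_one_le A hA hn]),
      show monDim A - 1 + 1 = monDim A by ring]
  rw [hJ] at h
  have hG : 0 < Gamma (monDim A / 2) := Real.Gamma_pos_of_pos (by linarith)
  field_simp at h ⊢
  linarith [h]

theorem final (α : ℝ) (hα : 0 < α) (t : ℝ) (ht : 0 < t) :
    ∫ x in monSet A, exp (-(t * ‖x‖ ^ α)) * ‖x‖ ^ α * monWeight A x =
      monDim A / α * t ^ (-(monDim A / α) - 1) *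
        (Gamma (monDim A / α + 1) / Gamma (monDim A / 2 + 1)) *
        monPi A ^ (monDim A / 2) := by
  have hD := monDim_pos A hA hn
  have hD1 := monDim_one_le A hA hn
  have hG : 0 < Gamma (monDim A / 2) := Real.Gamma_pos_of_pos (by linarith)
  have hC := realC_pos A hA
  -- LHS via transfer
  have hT := transfer A hA hn (fun r => exp (-(t * r ^ α)) * r ^ α) (by fun_prop)
  have hL : ∫ x in monSet A, exp (-(t * ‖x‖ ^ α)) * ‖x‖ ^ α * monWeight A x
      = ∫ x in monSet A, (fun r => exp (-(t * r ^ α)) * r ^ α) ‖x‖ * monWeight A x := by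
    refine setIntegral_congr_fun (measurableSet_monSet A) fun x _ => by ring
  -- the radial integral
  have hJ : ∫ r in Ioi (0:ℝ), (fun r => exp (-(t * r ^ α)) * r ^ α) r *
        (monDim A * r ^ (monDim A - 1))
      = monDim A * (t ^ (-(monDim A + α) / α) * (1/α) * Gamma ((monDim A + α) / α)) := by
    have hptw : ∀ r ∈ Ioi (0:ℝ), exp (-(t * r ^ α)) * r ^ α * (monDim A * r ^ (monDim A - 1))
        = monDim A * (r ^ (monDim A - 1 + α) * exp (-t * r ^ α)) := by
      intro r hr
      rw [Real.rpow_add hr, neg_mul]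
      ring
    rw [setIntegral_congr_fun measurableSet_Ioi hptw, integral_const_mul,
      integral_rpow_mul_exp_neg_mul_rpow hα (by linarith) ht,
      show monDim A - 1 + α + 1 = monDim A + α by ring]
  rw [hL, hT, hJ, VA_toReal A hA hn]
  -- final algebra
  have hPi : monPi A ^ (monDim A / 2) = realC A := by
    have hmp : monPi A = realC A ^ (2 / monDim A) := rfl
    rw [hmp, ← Real.rpow_mul hC.le,
      show (2 / monDim A) * (monDim A / 2) = 1 by field_simp, Real.rpow_one]
  rw [hPi, Real.Gamma_add_one (by positivity : monDim A / 2 ≠ 0),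
    show (monDim A + α) / α = monDim A / α + 1 by field_simp,
    show -(monDim A + α) / α = -(monDim A / α) - 1 by field_simp; ring]
  field_simp


end MonAux

/-- `∫_{ℝ^n_A} e^{-t|x|^α} |x|^α x^A dx
   = (D/α) t^{-D/α-1} Γ(D/α+1)/Γ(D/2+1) · Π(A)^{D/2}`. -/
theorem integral_exp_rpow_mul_rpow_monomial_weight {n : ℕ} (hn : 0 < n) (A : Fin n → ℝ)
    (hA : ∀ i, 0 ≤ A i) (α : ℝ) (hα : 0 < α) (t : ℝ) (ht : 0 < t) :
    ∫ x in monSet A, exp (-(t * ‖x‖ ^ α)) * ‖x‖ ^ α * monWeight A x =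
      monDim A / α * t ^ (-(monDim A / α) - 1) *
        (Gamma (monDim A / α + 1) / Gamma (monDim A / 2 + 1)) *
        monPi A ^ (monDim A / 2) := by
  exact MonAux.final A hA hn α hα t ht
end
end

section
/- Let A = (A_1,…,A_n) be a nonnegative vector in ℝ^n, D = n + A_1 + ⋯ + A_n > 2/1 arbitrary (D > 0), and k = #{i : A_i > 0}. For l ∈ ℕ let N = ln, B = (A,…,A) ∈ ℝ^N (l copies), D_B = lD, k_B = lk, and define C_{2,N,B} = D_B^{−1/2 − 1/D_B} · ( (∏_{i=1}^n Γ((A_i+1)/2))^l / (2^{lk} Γ(1 + D_B/2)) )^{−1/D_B} · (1/(D_B − 2))^{1/2} · ( 2Γ(D_B)/Γ(D_B/2)^2 )^{1/D_B} (defined for lD > 2). Then lim_{l→∞} l · C_{2,ln,B}^2 = 2/(Π(A) e D). -/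
open MeasureTheory Real Filter

noncomputable section

namespace SobolevAsympAux
open scoped Nat

lemma aux_log_div_self : Tendsto (fun t : ℝ => log t / t) atTop (nhds 0) :=
  Real.isLittleO_log_id_atTop.tendsto_div_nhds_zero

lemma aux_sub_atTop (c : ℝ) : Tendsto (fun t : ℝ => t - c) atTop atTop := by
  simpa [sub_eq_add_neg] using tendsto_atTop_add_const_right atTop (-c) (tendsto_id (α := ℝ))

lemma aux_div_sub (c : ℝ) : Tendsto (fun t : ℝ => t / (t - c)) atTop (nhds 1) := by
  have h2 : Tendsto (fun t : ℝ => 1 + c / (t - c)) atTop (nhds (1 + 0)) :=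
    tendsto_const_nhds.add (tendsto_const_nhds.div_atTop (aux_sub_atTop c))
  rw [add_zero] at h2
  refine h2.congr' ?_
  filter_upwards [eventually_gt_atTop (max c 0)] with t ht
  have h3 : 0 < t - c := sub_pos.2 ((le_max_left _ _).trans_lt ht)
  field_simp
  ring

lemma aux_log_sub_log (c : ℝ) : Tendsto (fun t : ℝ => log t - log (t - c)) atTop (nhds 0) := by
  have h3 : Tendsto (fun t : ℝ => log (t / (t - c))) atTop (nhds (log 1)) :=
    ((Real.continuousAt_log one_ne_zero).tendsto).comp (aux_div_sub c)
  rw [Real.log_one] at h3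
  refine h3.congr' ?_
  filter_upwards [eventually_gt_atTop (max c 0)] with t ht
  have htc : 0 < t - c := sub_pos.2 ((le_max_left _ _).trans_lt ht)
  have ht0 : 0 < t := (le_max_right c 0).trans_lt ht
  rw [Real.log_div ht0.ne' htc.ne']

lemma aux_factorial :
    Tendsto (fun n : ℕ => log (n !) / n - log n) atTop (nhds (-1)) := by
  have hsq : 0 < Real.sqrt π := Real.sqrt_pos.2 Real.pi_pos
  have h1 : Tendsto (fun n : ℕ => log (Stirling.stirlingSeq n) / n) atTop (nhds 0) :=
    (((Real.continuousAt_log hsq.ne').tendsto).comp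
      Stirling.tendsto_stirlingSeq_sqrt_pi).div_atTop tendsto_natCast_atTop_atTop
  have h2' : Tendsto (fun n : ℕ => (2 : ℝ) * n) atTop atTop :=
    Tendsto.const_mul_atTop two_pos tendsto_natCast_atTop_atTop
  have h2 : Tendsto (fun n : ℕ => log (2 * (n : ℝ)) / (2 * n)) atTop (nhds 0) :=
    aux_log_div_self.comp h2'
  have h3 := (h1.add h2).add (tendsto_const_nhds (x := (-1 : ℝ)))
  rw [add_zero, zero_add] at h3
  refine h3.congr' ?_
  filter_upwards [eventually_ge_atTop 1] with n hn
  have hn0 : (0 : ℝ) < n := by exact_mod_cast hn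
  have hf := Stirling.log_stirlingSeq_formula n
  have hfact : Real.log (n !) =
      log (Stirling.stirlingSeq n) + 1 / 2 * log (2 * n) + n * log (n / Real.exp 1) := by
    linarith [hf]
  rw [Real.log_div hn0.ne' (Real.exp_ne_zero 1), Real.log_exp] at hfact
  rw [hfact]
  field_simp
  ring

lemma aux_floor_fact :
    Tendsto (fun t : ℝ => log ((⌊t⌋₊)!) / t - log t) atTop (nhds (-1)) := by
  have hF : Tendsto (fun t : ℝ => log ((⌊t⌋₊)!) / (⌊t⌋₊ : ℝ) - log (⌊t⌋₊ : ℝ)) atTop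
      (nhds (-1)) := aux_factorial.comp tendsto_nat_floor_atTop
  have hdiv : Tendsto (fun t : ℝ => (⌊t⌋₊ : ℝ) / t) atTop (nhds 1) :=
    tendsto_nat_floor_div_atTop
  have hA := hF.mul hdiv
  have hB : Tendsto (fun t : ℝ => ((⌊t⌋₊ : ℝ) / t - 1) * log (⌊t⌋₊ : ℝ)) atTop (nhds 0) := by
    have hlow : Tendsto (fun t : ℝ => -(log t / t)) atTop (nhds (-0)) := aux_log_div_self.neg
    rw [neg_zero] at hlow
    refine tendsto_of_tendsto_of_tendsto_of_le_of_le' hlow tendsto_const_nhds ?_ ?_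
    · filter_upwards [eventually_ge_atTop 2] with t ht
      have ht0 : (0 : ℝ) < t := by linarith
      have hm1 : (1 : ℝ) ≤ (⌊t⌋₊ : ℝ) := by
        exact_mod_cast Nat.le_floor (by exact_mod_cast (by linarith : (1:ℝ) ≤ t))
      have hmle : (⌊t⌋₊ : ℝ) ≤ t := Nat.floor_le ht0.le
      have hlogm0 : 0 ≤ log (⌊t⌋₊ : ℝ) := Real.log_nonneg hm1
      have hlogmt : log (⌊t⌋₊ : ℝ) ≤ log t := Real.log_le_log (by linarith) hmle
      have htm : t - (⌊t⌋₊ : ℝ) ≤ 1 := by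
        have := Nat.lt_floor_add_one t; linarith
      have key : (t - (⌊t⌋₊ : ℝ)) / t * log (⌊t⌋₊ : ℝ) ≤ 1 / t * log t := by
        apply mul_le_mul _ hlogmt hlogm0 (by positivity)
        gcongr
      have hrw : ((⌊t⌋₊ : ℝ) / t - 1) * log (⌊t⌋₊ : ℝ) =
          -((t - (⌊t⌋₊ : ℝ)) / t * log (⌊t⌋₊ : ℝ)) := by
        field_simp; ring
      rw [hrw]
      have : -(log t / t) = -(1 / t * log t) := by ring
      rw [this]
      exact neg_le_neg key
    · filter_upwards [eventually_ge_atTop 1] with t ht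
      have ht0 : (0 : ℝ) < t := by linarith
      have hm1 : (1 : ℝ) ≤ (⌊t⌋₊ : ℝ) := by
        exact_mod_cast Nat.le_floor (by exact_mod_cast (by linarith : (1:ℝ) ≤ t))
      have hmle : (⌊t⌋₊ : ℝ) ≤ t := Nat.floor_le ht0.le
      exact mul_nonpos_of_nonpos_of_nonneg
        (sub_nonpos.2 ((div_le_one ht0).2 hmle)) (Real.log_nonneg hm1)
  have hC : Tendsto (fun t : ℝ => log (⌊t⌋₊ : ℝ) - log t) atTop (nhds 0) := by
    have hlow : Tendsto (fun t : ℝ => -(log t - log (t - 1))) atTop (nhds (-0)) :=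
      (aux_log_sub_log 1).neg
    rw [neg_zero] at hlow
    refine tendsto_of_tendsto_of_tendsto_of_le_of_le' hlow tendsto_const_nhds ?_ ?_
    · filter_upwards [eventually_ge_atTop 2] with t ht
      have h1 : t - 1 ≤ (⌊t⌋₊ : ℝ) := by
        have := Nat.lt_floor_add_one t; linarith
      have h2 : log (t - 1) ≤ log (⌊t⌋₊ : ℝ) := Real.log_le_log (by linarith) h1
      linarith
    · filter_upwards [eventually_ge_atTop 1] with t ht
      have ht0 : (0 : ℝ) < t := by linarith
      have hmle : (⌊t⌋₊ : ℝ) ≤ t := Nat.floor_le ht0.le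
      have : log (⌊t⌋₊ : ℝ) ≤ log t := by
        rcases eq_or_lt_of_le (by positivity : (0:ℝ) ≤ (⌊t⌋₊ : ℝ)) with h | h
        · simp [← h, Real.log_nonneg (by linarith : (1:ℝ) ≤ t)]
        · exact Real.log_le_log h hmle
      linarith
  have hcomb := (hA.add hB).add hC
  rw [show (-1 : ℝ) * 1 + 0 + 0 = -1 by ring] at hcomb
  refine hcomb.congr' ?_
  filter_upwards [eventually_ge_atTop 1] with t ht
  have ht0 : (0 : ℝ) < t := by linarith
  have hm1 : (1 : ℝ) ≤ (⌊t⌋₊ : ℝ) := by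
    exact_mod_cast Nat.le_floor (by exact_mod_cast (by linarith : (1:ℝ) ≤ t))
  have hm0 : (⌊t⌋₊ : ℝ) ≠ 0 := by linarith
  field_simp
  ring

lemma aux_floor_log : Tendsto (fun t : ℝ => log (⌊t⌋₊ : ℝ) / t) atTop (nhds 0) := by
  refine tendsto_of_tendsto_of_tendsto_of_le_of_le' tendsto_const_nhds aux_log_div_self ?_ ?_
  · filter_upwards [eventually_ge_atTop 1] with t ht
    have hm1 : (1 : ℝ) ≤ (⌊t⌋₊ : ℝ) := by
      exact_mod_cast Nat.le_floor (by exact_mod_cast (by linarith : (1:ℝ) ≤ t))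
    positivity
  · filter_upwards [eventually_ge_atTop 1] with t ht
    have ht0 : (0 : ℝ) < t := by linarith
    have hmle : (⌊t⌋₊ : ℝ) ≤ t := Nat.floor_le ht0.le
    have hm1 : (1 : ℝ) ≤ (⌊t⌋₊ : ℝ) := by
      exact_mod_cast Nat.le_floor (by exact_mod_cast (by linarith : (1:ℝ) ≤ t))
    gcongr

lemma aux_gamma_stirling :
    Tendsto (fun t : ℝ => log (Real.Gamma t) / t - log t) atTop (nhds (-1)) := by
  have hmono := Real.Gamma_strictMonoOn_Ici.monotoneOn
  have hlow := aux_floor_fact.sub aux_floor_log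
  rw [sub_zero] at hlow
  refine tendsto_of_tendsto_of_tendsto_of_le_of_le' hlow aux_floor_fact ?_ ?_
  · filter_upwards [eventually_ge_atTop 3] with t ht
    have ht2 : (2 : ℝ) ≤ t := by linarith
    have ht0 : (0 : ℝ) < t := by linarith
    have hm3 : 3 ≤ ⌊t⌋₊ := Nat.le_floor (by exact_mod_cast ht)
    have hm2 : (2 : ℝ) ≤ (⌊t⌋₊ : ℝ) := by exact_mod_cast hm3.trans' (by norm_num)
    have hmt : (⌊t⌋₊ : ℝ) ≤ t := Nat.floor_le ht0.le
    have hm0 : (0 : ℝ) < (⌊t⌋₊ : ℝ) := by linarith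
    have hGt : 0 < Real.Gamma t := Real.Gamma_pos_of_pos ht0
    have hGm : Real.Gamma (⌊t⌋₊ : ℝ) ≤ Real.Gamma t :=
      hmono (Set.mem_Ici.2 hm2) (Set.mem_Ici.2 ht2) hmt
    have hGmval : Real.Gamma (⌊t⌋₊ : ℝ) = ((⌊t⌋₊)! : ℝ) / (⌊t⌋₊ : ℝ) := by
      have h1 : Real.Gamma ((⌊t⌋₊ : ℝ) + 1) = (⌊t⌋₊ : ℝ) * Real.Gamma (⌊t⌋₊ : ℝ) :=
        Real.Gamma_add_one hm0.ne'
      have h2 : Real.Gamma ((⌊t⌋₊ : ℝ) + 1) = ((⌊t⌋₊)! : ℝ) := Real.Gamma_nat_eq_factorial _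
      field_simp
      rw [← h2, h1]
      ring
    have hle : log ((⌊t⌋₊)! : ℝ) - log (⌊t⌋₊ : ℝ) ≤ log (Real.Gamma t) := by
      have := Real.log_le_log (by rw [hGmval]; positivity) hGm
      rw [hGmval, Real.log_div (by positivity) hm0.ne'] at this
      exact this
    have hdiv : (log ((⌊t⌋₊)! : ℝ) - log (⌊t⌋₊ : ℝ)) / t ≤ log (Real.Gamma t) / t :=
      (div_le_div_iff_of_pos_right ht0).2 hle
    have hsub := sub_div (log ((⌊t⌋₊)! : ℝ)) (log (⌊t⌋₊ : ℝ)) t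
    linarith
  · filter_upwards [eventually_ge_atTop 3] with t ht
    have ht2 : (2 : ℝ) ≤ t := by linarith
    have ht0 : (0 : ℝ) < t := by linarith
    have hGt : 0 < Real.Gamma t := Real.Gamma_pos_of_pos ht0
    have hm2 : (2 : ℝ) ≤ (⌊t⌋₊ : ℝ) + 1 := by
      have : t - 1 ≤ (⌊t⌋₊ : ℝ) := by have := Nat.lt_floor_add_one t; linarith
      linarith
    have hup : Real.Gamma t ≤ Real.Gamma ((⌊t⌋₊ : ℝ) + 1) :=
      hmono (Set.mem_Ici.2 ht2) (Set.mem_Ici.2 hm2) (Nat.lt_floor_add_one t).le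
    rw [Real.Gamma_nat_eq_factorial] at hup
    have hle : log (Real.Gamma t) ≤ log ((⌊t⌋₊)! : ℝ) := Real.log_le_log hGt hup
    have hdiv : log (Real.Gamma t) / t ≤ log ((⌊t⌋₊)! : ℝ) / t := (div_le_div_iff_of_pos_right ht0).2 hle
    linarith

lemma aux_s_atTop : Tendsto (fun t : ℝ => 1 + t / 2) atTop atTop :=
  tendsto_atTop_add_const_left atTop 1 (Tendsto.atTop_div_const two_pos tendsto_id)

lemma aux_phi :
    Tendsto (fun t : ℝ => 2 / t * log (Real.Gamma (1 + t / 2)) - log t) atTop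
      (nhds (-1 - log 2)) := by
  have hS' : Tendsto (fun t : ℝ => log (Real.Gamma (1 + t / 2)) / (1 + t / 2) - log (1 + t / 2))
      atTop (nhds (-1)) := aux_gamma_stirling.comp aux_s_atTop
  have hq : Tendsto (fun t : ℝ => (1 + t / 2) / (t / 2)) atTop (nhds 1) := by
    have h : Tendsto (fun t : ℝ => (1 + t / 2) / ((1 + t / 2) - 1)) atTop (nhds 1) :=
      (aux_div_sub 1).comp aux_s_atTop
    exact h.congr fun t => by norm_num
  have hlog1 : Tendsto (fun t : ℝ => log (1 + t / 2) - log (t / 2)) atTop (nhds 0) := by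
    have h : Tendsto (fun t : ℝ => log (1 + t / 2) - log ((1 + t / 2) - 1)) atTop (nhds 0) :=
      (aux_log_sub_log 1).comp aux_s_atTop
    exact h.congr fun t => by norm_num
  have hlog2 : Tendsto (fun t : ℝ => log (1 + t / 2) / (t / 2)) atTop (nhds 0) := by
    have h : Tendsto (fun t : ℝ => log (1 + t / 2) / (1 + t / 2) * ((1 + t / 2) / (t / 2)))
        atTop (nhds (0 * 1)) := (aux_log_div_self.comp aux_s_atTop).mul hq
    rw [zero_mul] at h
    refine h.congr' ?_
    filter_upwards [eventually_gt_atTop 0] with t ht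
    have h1 : (0 : ℝ) < 1 + t / 2 := by linarith
    field_simp
  have hcomb := (((hS'.mul hq).add hlog1).add hlog2).sub
    (tendsto_const_nhds (x := Real.log 2))
  rw [show (-1 : ℝ) * 1 + 0 + 0 - Real.log 2 = -1 - log 2 by ring] at hcomb
  refine hcomb.congr' ?_
  filter_upwards [eventually_gt_atTop 0] with t ht
  have hs1 : (0 : ℝ) < 1 + t / 2 := by linarith
  have hlogt : log (t / 2) = log t - log 2 := Real.log_div ht.ne' two_ne_zero
  rw [hlogt]
  field_simp
  ring

lemma aux_ratio :
    Tendsto (fun t : ℝ => 2 / t *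
      (log (Real.Gamma (t / 2 + 1 / 2)) - log (Real.Gamma (t / 2)) - log (Real.sqrt π)))
      atTop (nhds 0) := by
  have hmono := Real.Gamma_strictMonoOn_Ici.monotoneOn
  have h2t : Tendsto (fun t : ℝ => 2 / t) atTop (nhds 0) :=
    tendsto_const_nhds.div_atTop tendsto_id
  have hB : Tendsto (fun t : ℝ => 2 / t * log (Real.sqrt π)) atTop (nhds 0) := by
    simpa using h2t.mul_const (log (Real.sqrt π))
  have hup : Tendsto (fun t : ℝ => 2 / t * log t) atTop (nhds 0) := by
    have := aux_log_div_self.const_mul (2 : ℝ)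
    rw [mul_zero] at this
    exact this.congr fun t => by ring
  have hA : Tendsto (fun t : ℝ =>
      2 / t * (log (Real.Gamma (t / 2 + 1 / 2)) - log (Real.Gamma (t / 2)))) atTop (nhds 0) := by
    refine tendsto_of_tendsto_of_tendsto_of_le_of_le' tendsto_const_nhds hup ?_ ?_
    · filter_upwards [eventually_ge_atTop 4] with t ht
      have ht2 : (2 : ℝ) ≤ t / 2 := by linarith
      have h0 : 0 < Real.Gamma (t / 2) := Real.Gamma_pos_of_pos (by linarith)
      have mono1 : Real.Gamma (t / 2) ≤ Real.Gamma (t / 2 + 1 / 2) :=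
        hmono (Set.mem_Ici.2 ht2) (Set.mem_Ici.2 (by linarith)) (by linarith)
      have : log (Real.Gamma (t / 2)) ≤ log (Real.Gamma (t / 2 + 1 / 2)) :=
        Real.log_le_log h0 mono1
      have h2tpos : (0 : ℝ) ≤ 2 / t := by positivity
      exact mul_nonneg h2tpos (by linarith)
    · filter_upwards [eventually_ge_atTop 4] with t ht
      have ht2 : (2 : ℝ) ≤ t / 2 := by linarith
      have ht0 : (0 : ℝ) < t := by linarith
      have h0 : 0 < Real.Gamma (t / 2) := Real.Gamma_pos_of_pos (by linarith)
      have h1 : 0 < Real.Gamma (t / 2 + 1 / 2) := Real.Gamma_pos_of_pos (by linarith)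
      have hadd : Real.Gamma (t / 2 + 1) = t / 2 * Real.Gamma (t / 2) :=
        Real.Gamma_add_one (by positivity)
      have mono2 : Real.Gamma (t / 2 + 1 / 2) ≤ Real.Gamma (t / 2 + 1) :=
        hmono (Set.mem_Ici.2 (by linarith)) (Set.mem_Ici.2 (by linarith)) (by linarith)
      have e1 : log (Real.Gamma (t / 2 + 1 / 2)) ≤ log (t / 2 * Real.Gamma (t / 2)) :=
        Real.log_le_log h1 (mono2.trans_eq hadd)
      rw [Real.log_mul (by positivity) h0.ne'] at e1
      have e2 : log (t / 2) ≤ log t := Real.log_le_log (by positivity) (by linarith)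
      have : log (Real.Gamma (t / 2 + 1 / 2)) - log (Real.Gamma (t / 2)) ≤ log t := by linarith
      exact mul_le_mul_of_nonneg_left this (by positivity)
  have hAB := hA.sub hB
  rw [sub_zero] at hAB
  exact hAB.congr fun t => by ring


end SobolevAsympAux

open SobolevAsympAux

/-- asymptotics of the sharp `L²` Sobolev constant `C_{2,ln,B}` for the `l`-fold
concatenated weight `B = (A,…,A)` (so `D_B = lD`, `k_B = lk`):
`lim_{l→∞} l C_{2,ln,B}² = 2/(Π(A) e D)`. -/
theorem tendsto_l_mul_sobolev_const_sq {n : ℕ} (hn : 0 < n) (A : Fin n → ℝ)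
    (hA : ∀ i, 0 ≤ A i) :
    Tendsto
      (fun l : ℕ =>
        (l : ℝ) *
          (((l : ℝ) * monDim A) ^ (-(1 / 2 : ℝ) - 1 / ((l : ℝ) * monDim A)) *
              ((∏ i, Gamma ((A i + 1) / 2)) ^ l /
                  ((2 : ℝ) ^ (l * monK A) * Gamma (1 + (l : ℝ) * monDim A / 2))) ^
                (-(1 / ((l : ℝ) * monDim A))) *
              (1 / ((l : ℝ) * monDim A - 2)) ^ ((1 : ℝ) / 2) *
              (2 * Gamma ((l : ℝ) * monDim A) / Gamma ((l : ℝ) * monDim A / 2) ^ 2) ^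
                (1 / ((l : ℝ) * monDim A))) ^ 2)
      atTop (nhds (2 / (monPi A * exp 1 * monDim A))) := by
  have hsum : 0 ≤ ∑ i, A i := Finset.sum_nonneg fun i _ => hA i
  have hD1 : (1 : ℝ) ≤ monDim A := by
    have h1 : (1 : ℝ) ≤ (n : ℝ) := by exact_mod_cast hn
    simp only [monDim, Fintype.card_fin]
    linarith
  have hD0 : (0 : ℝ) < monDim A := lt_of_lt_of_le one_pos hD1
  have hP : 0 < ∏ i, Gamma ((A i + 1) / 2) := by
    apply Finset.prod_pos
    intro i _
    exact Real.Gamma_pos_of_pos (by have := hA i; linarith)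
  have hPi : 0 < monPi A :=
    Real.rpow_pos_of_pos (div_pos hP (by positivity)) _
  have hL : 0 < 2 / (monPi A * exp 1 * monDim A) :=
    div_pos two_pos (mul_pos (mul_pos hPi (Real.exp_pos 1)) hD0)
  have hx : Tendsto (fun l : ℕ => (l : ℝ) * monDim A) atTop atTop :=
    Tendsto.atTop_mul_const hD0 tendsto_natCast_atTop_atTop
  set D := monDim A with hD_def
  set P := ∏ i, Gamma ((A i + 1) / 2) with hP_def
  set k := monK A with hk_def
  have hp1 : Tendsto (fun l : ℕ => log ((l : ℝ) * D) - log ((l : ℝ) * D - 2)) atTop (nhds 0) :=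
    (aux_log_sub_log 2).comp hx
  have hp2 : Tendsto (fun l : ℕ =>
      2 / ((l : ℝ) * D) * log (Real.Gamma (1 + (l : ℝ) * D / 2)) - log ((l : ℝ) * D)) atTop
      (nhds (-1 - log 2)) := aux_phi.comp hx
  have hp3 : Tendsto (fun l : ℕ => 2 / ((l : ℝ) * D) * log ((l : ℝ) * D)) atTop (nhds 0) := by
    have h := (aux_log_div_self.comp hx).const_mul (2 : ℝ)
    rw [mul_zero] at h
    refine h.congr fun l => ?_
    simp only [Function.comp_apply]
    ring
  have hp4 : Tendsto (fun l : ℕ => 2 / ((l : ℝ) * D) *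
      (log (Real.Gamma ((l : ℝ) * D / 2 + 1 / 2)) - log (Real.Gamma ((l : ℝ) * D / 2)) -
        log (Real.sqrt π))) atTop (nhds 0) := aux_ratio.comp hx
  set C0 : ℝ := -Real.log (monPi A) - Real.log D + 2 * Real.log 2 with hC0_def
  have hsum_t := ((((tendsto_const_nhds (x := C0)).add hp1).add hp2).sub hp3).add hp4
  have hval : C0 + 0 + (-1 - log 2) - 0 + 0 = log (2 / (monPi A * exp 1 * D)) := by
    rw [Real.log_div two_ne_zero (by positivity),
      Real.log_mul (by positivity) hD0.ne', Real.log_mul hPi.ne' (Real.exp_ne_zero 1),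
      Real.log_exp, hC0_def]
    ring
  rw [hval] at hsum_t
  have hkey : Tendsto (fun l : ℕ => Real.log ((l : ℝ) *
      (((l : ℝ) * D) ^ (-(1 / 2 : ℝ) - 1 / ((l : ℝ) * D)) *
          (P ^ l / ((2 : ℝ) ^ (l * k) * Gamma (1 + (l : ℝ) * D / 2))) ^
            (-(1 / ((l : ℝ) * D))) *
          (1 / ((l : ℝ) * D - 2)) ^ ((1 : ℝ) / 2) *
          (2 * Gamma ((l : ℝ) * D) / Gamma ((l : ℝ) * D / 2) ^ 2) ^
            (1 / ((l : ℝ) * D))) ^ 2)) atTop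
      (nhds (log (2 / (monPi A * exp 1 * D)))) := by
    refine hsum_t.congr' ?_
    filter_upwards [eventually_ge_atTop 5] with l hl
    have hl5 : (5 : ℝ) ≤ (l : ℝ) := by exact_mod_cast hl
    have hl0 : (0 : ℝ) < (l : ℝ) := by linarith
    have hx5 : (5 : ℝ) ≤ (l : ℝ) * D := by nlinarith
    have hx0 : (0 : ℝ) < (l : ℝ) * D := by linarith
    have hx2 : (0 : ℝ) < (l : ℝ) * D - 2 := by linarith
    have hxh : (0 : ℝ) < (l : ℝ) * D / 2 := by linarith
    have hG1 : 0 < Real.Gamma (1 + (l : ℝ) * D / 2) := Real.Gamma_pos_of_pos (by linarith)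
    have hGx : 0 < Real.Gamma ((l : ℝ) * D) := Real.Gamma_pos_of_pos hx0
    have hGh : 0 < Real.Gamma ((l : ℝ) * D / 2) := Real.Gamma_pos_of_pos hxh
    have hGhh : 0 < Real.Gamma ((l : ℝ) * D / 2 + 1 / 2) := Real.Gamma_pos_of_pos (by linarith)
    have hsqpi : 0 < Real.sqrt π := Real.sqrt_pos.2 Real.pi_pos
    -- duplication formula in log form
    have hdup : Real.log (Real.Gamma ((l : ℝ) * D)) =
        Real.log (Real.Gamma ((l : ℝ) * D / 2)) +
          Real.log (Real.Gamma ((l : ℝ) * D / 2 + 1 / 2)) +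
          ((l : ℝ) * D - 1) * Real.log 2 - Real.log (Real.sqrt π) := by
      have h := Real.Gamma_mul_Gamma_add_half ((l : ℝ) * D / 2)
      rw [show 2 * ((l : ℝ) * D / 2) = (l : ℝ) * D by ring] at h
      have hlogs := congrArg Real.log h
      rw [Real.log_mul (by positivity) hsqpi.ne',
        Real.log_mul hGx.ne' (by positivity),
        Real.log_mul hGh.ne' hGhh.ne', Real.log_rpow two_pos] at hlogs
      linear_combination -hlogs
    -- log of monPi
    have hlogPi : Real.log (monPi A) = 2 / D * (Real.log P - (k : ℝ) * Real.log 2) := by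
      rw [monPi, ← hD_def, ← hk_def, ← hP_def,
        Real.log_rpow (div_pos hP (by positivity)),
        Real.log_div hP.ne' (by positivity), Real.log_pow]
    have hll : Real.log ((l : ℝ) * D) = Real.log (l : ℝ) + Real.log D :=
      Real.log_mul hl0.ne' hD0.ne'
    -- positivity of the four factors
    have hT1 : (0 : ℝ) < ((l : ℝ) * D) ^ (-(1 / 2 : ℝ) - 1 / ((l : ℝ) * D)) :=
      Real.rpow_pos_of_pos hx0 _
    have hbase2 : (0 : ℝ) < P ^ l / ((2 : ℝ) ^ (l * k) * Gamma (1 + (l : ℝ) * D / 2)) := by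
      positivity
    have hT2 : (0 : ℝ) <
        (P ^ l / ((2 : ℝ) ^ (l * k) * Gamma (1 + (l : ℝ) * D / 2))) ^ (-(1 / ((l : ℝ) * D))) :=
      Real.rpow_pos_of_pos hbase2 _
    have hT3 : (0 : ℝ) < (1 / ((l : ℝ) * D - 2)) ^ ((1 : ℝ) / 2) :=
      Real.rpow_pos_of_pos (by positivity) _
    have hbase4 : (0 : ℝ) < 2 * Gamma ((l : ℝ) * D) / Gamma ((l : ℝ) * D / 2) ^ 2 := by
      positivity
    have hT4 : (0 : ℝ) <
        (2 * Gamma ((l : ℝ) * D) / Gamma ((l : ℝ) * D / 2) ^ 2) ^ (1 / ((l : ℝ) * D)) :=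
      Real.rpow_pos_of_pos hbase4 _
    have hRHS : Real.log ((l : ℝ) *
        (((l : ℝ) * D) ^ (-(1 / 2 : ℝ) - 1 / ((l : ℝ) * D)) *
            (P ^ l / ((2 : ℝ) ^ (l * k) * Gamma (1 + (l : ℝ) * D / 2))) ^
              (-(1 / ((l : ℝ) * D))) *
            (1 / ((l : ℝ) * D - 2)) ^ ((1 : ℝ) / 2) *
            (2 * Gamma ((l : ℝ) * D) / Gamma ((l : ℝ) * D / 2) ^ 2) ^
              (1 / ((l : ℝ) * D))) ^ 2) =
        Real.log (l : ℝ) + 2 * ((-(1 / 2 : ℝ) - 1 / ((l : ℝ) * D)) * Real.log ((l : ℝ) * D)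
          + (-(1 / ((l : ℝ) * D))) * ((l : ℝ) * Real.log P
              - ((l : ℝ) * (k : ℝ) * Real.log 2 + Real.log (Gamma (1 + (l : ℝ) * D / 2))))
          + (1 / 2 : ℝ) * (-Real.log ((l : ℝ) * D - 2))
          + (1 / ((l : ℝ) * D)) * (Real.log 2 + Real.log (Gamma ((l : ℝ) * D))
              - 2 * Real.log (Gamma ((l : ℝ) * D / 2)))) := by
      rw [Real.log_mul hl0.ne' (by positivity), Real.log_pow,
        Real.log_mul (by positivity) hT4.ne', Real.log_mul (by positivity) hT3.ne',
        Real.log_mul hT1.ne' hT2.ne',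
        Real.log_rpow hx0, Real.log_rpow hbase2, Real.log_rpow (by positivity),
        Real.log_rpow hbase4,
        Real.log_div (pow_ne_zero _ hP.ne') (by positivity),
        Real.log_mul (by positivity) hG1.ne',
        Real.log_div (by positivity) (pow_ne_zero _ hGh.ne'),
        Real.log_mul two_ne_zero hGx.ne',
        Real.log_pow, Real.log_pow, Real.log_pow,
        one_div ((l : ℝ) * D - 2), Real.log_inv]
      push_cast
      ring
    rw [hRHS, hdup, hC0_def, hlogPi, hll]
    field_simp
    ring
  have hexp := (Real.continuous_exp.tendsto _).comp hkey
  rw [Real.exp_log hL] at hexp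
  refine hexp.congr' ?_
  filter_upwards [eventually_ge_atTop 5] with l hl
  have hl5 : (5 : ℝ) ≤ (l : ℝ) := by exact_mod_cast hl
  have hl0 : (0 : ℝ) < (l : ℝ) := by linarith
  have hx5 : (5 : ℝ) ≤ (l : ℝ) * D := by nlinarith
  have hx0 : (0 : ℝ) < (l : ℝ) * D := by linarith
  have hx2 : (0 : ℝ) < (l : ℝ) * D - 2 := by linarith
  have hG1 : 0 < Real.Gamma (1 + (l : ℝ) * D / 2) := Real.Gamma_pos_of_pos (by linarith)
  have hGx : 0 < Real.Gamma ((l : ℝ) * D) := Real.Gamma_pos_of_pos hx0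
  have hGh : 0 < Real.Gamma ((l : ℝ) * D / 2) := Real.Gamma_pos_of_pos (by linarith)
  have hT1 : (0 : ℝ) < ((l : ℝ) * D) ^ (-(1 / 2 : ℝ) - 1 / ((l : ℝ) * D)) :=
    Real.rpow_pos_of_pos hx0 _
  have hT2 : (0 : ℝ) <
      (P ^ l / ((2 : ℝ) ^ (l * k) * Gamma (1 + (l : ℝ) * D / 2))) ^ (-(1 / ((l : ℝ) * D))) :=
    Real.rpow_pos_of_pos (by positivity) _
  have hT3 : (0 : ℝ) < (1 / ((l : ℝ) * D - 2)) ^ ((1 : ℝ) / 2) :=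
    Real.rpow_pos_of_pos (by positivity) _
  have hT4 : (0 : ℝ) <
      (2 * Gamma ((l : ℝ) * D) / Gamma ((l : ℝ) * D / 2) ^ 2) ^ (1 / ((l : ℝ) * D)) :=
    Real.rpow_pos_of_pos (by positivity) _
  exact Real.exp_log (by positivity)
end
end
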